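/- arXiv:2410.07483 — 5 statements merged into one kernel-verified Lean document; each statement's English description precedes it below -/
import Mathlib

section
/- (Population triple robustness, Proposition 2.) Fix z ∈ {1,...,J} and g ∈ {J−z+1,...,J}. Let π̃_w, p̃_w : 𝒳 → [c, 1−c] for w ∈ {J−g, J−g+1, z} (with c ∈ (0, 1/2)) and m̃_z : 𝒳 → ℝ be bounded measurable working functions, with the convention p̃_0 := 0. Define ψ̃_{S,w} := 1(Z=w)·(S − p̃_w(X))/π̃_w(X) + p̃_w(X) (with ψ̃_{S,0} := 0) and ξ̃ := ((p̃_{J−g+1}(X) − p̃_{J−g}(X))/p̃_z(X))·1(Z=z)·S·(Y − m̃_z(X))/π̃_z(X) + m̃_z(X)·(ψ̃_{S,J−g+1} − ψ̃_{S,J−g}). If at least two of the following three conditions hold: (i) π̃_w(X) = π_w(X) P-a.s. for all w ∈ {J−g, J−g+1, z}; (ii) p̃_w(X) = p_w(X) P-a.s. for all w ∈ {J−g, J−g+1, z}; (iii) m̃_z(X) = m_z(X) P-a.s.; then, under treatment ignorability, monotonicity, principal ignorability and positivity: E[ξ̃] = E[Y_z·1(G=g)] and E[ψ̃_{S,J−g+1}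 − ψ̃_{S,J−g}] = P(G=g). -/
open MeasureTheory ProbabilityTheory

noncomputable section

namespace TruncationByDeath

variable {Ω : Type*} {𝒳 : Type*} [MeasurableSpace Ω] [MeasurableSpace 𝒳]

/-- The σ-algebra on `Ω` generated by the covariate map `X`. -/
def mX (X : Ω → 𝒳) : MeasurableSpace Ω := MeasurableSpace.comap X inferInstance

/-- Real-valued indicator of the event `{Z = z}`. -/
def indic (Z : Ω → ℕ) (z : ℕ) : Ω → ℝ := fun ω => if Z ω = z then 1 else 0

/-- Observed survival status `S := ∑_z 1(Z=z) ⬝ S_z`. -/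
def Sobs (J : ℕ) (Z : Ω → ℕ) (S : ℕ → Ω → ℝ) : Ω → ℝ :=
  fun ω => ∑ z ∈ Finset.Icc 1 J, indic Z z ω * S z ω

/-- Observed outcome `Y := ∑_z 1(Z=z) ⬝ Y_z`. -/
def Yobs (J : ℕ) (Z : Ω → ℕ) (Y : ℕ → Ω → ℝ) : Ω → ℝ :=
  fun ω => ∑ z ∈ Finset.Icc 1 J, indic Z z ω * Y z ω

/-- Principal score `p_z(X) := E[S_z | σ(X)]`, with conventions `p_0 := 0` and `p_{J+1} := 1`. -/
def pscore (P : Measure Ω) (X : Ω → 𝒳) (S : ℕ → Ω → ℝ) (J : ℕ) (z : ℕ) : Ω → ℝ :=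
  if z = 0 then fun _ => 0 else if z = J + 1 then fun _ => 1 else P[S z | mX X]

/-- Treatment probability `π_z := P(Z = z)`. -/
def piZ (P : Measure Ω) (Z : Ω → ℕ) (z : ℕ) : ℝ := (P {ω | Z ω = z}).toReal

/-- Principal stratum variable `G := ∑_{z=1}^J S_z`. -/
def Gsum (J : ℕ) (S : ℕ → Ω → ℝ) : Ω → ℝ := fun ω => ∑ z ∈ Finset.Icc 1 J, S z ω

/-- Real-valued indicator of the event `{G = g}`. -/
def indG (J : ℕ) (S : ℕ → Ω → ℝ) (g : ℕ) : Ω → ℝ :=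
  Set.indicator {ω | Gsum J S ω = (g : ℝ)} (fun _ => (1 : ℝ))

/-- Principal score of the stratum `g` : `e_g(X) := E[1(G=g) | σ(X)]`. -/
def eg (P : Measure Ω) (X : Ω → 𝒳) (J : ℕ) (S : ℕ → Ω → ℝ) (g : ℕ) : Ω → ℝ :=
  P[indG J S g | mX X]

/-- Basic setup: measurability, ranges, values and integrability of the primitives. -/
structure Setup (P : Measure Ω) (J : ℕ) (X : Ω → 𝒳) (Z : Ω → ℕ)
    (S Y : ℕ → Ω → ℝ) : Prop where
  hJ : 2 ≤ J
  hX : Measurable X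
  hZ : Measurable Z
  hZr : ∀ ω, Z ω ∈ Finset.Icc 1 J
  hSm : ∀ z, Measurable (S z)
  hS01 : ∀ z ω, S z ω = 0 ∨ S z ω = 1
  hYm : ∀ z, Measurable (Y z)
  hYint : ∀ z, Integrable (Y z) P

/-- Randomization : `Z` is independent of `(X, S_1,…,S_J, Y_1,…,Y_J)` and `π_z > 0` for all
`z ∈ {1,…,J}`. -/
def Randomization (P : Measure Ω) (J : ℕ) (X : Ω → 𝒳) (Z : Ω → ℕ)
    (S Y : ℕ → Ω → ℝ) : Prop :=
  IndepFun Z (fun ω => (X ω, fun z => S z ω, fun z => Y z ω)) P ∧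
    ∀ z ∈ Finset.Icc 1 J, 0 < piZ P Z z

/-- Monotonicity : `S_{z'} ≤ S_z` a.s. whenever `z' ≤ z`. -/
def Monotonicity (P : Measure Ω) (J : ℕ) (S : ℕ → Ω → ℝ) : Prop :=
  ∀ z ∈ Finset.Icc 1 J, ∀ z' ∈ Finset.Icc 1 J, z' ≤ z → ∀ᵐ ω ∂P, S z' ω ≤ S z ω

/-- Principal ignorability. -/
def PrincipalIgnorability (P : Measure Ω) (J : ℕ) (X : Ω → 𝒳)
    (S Y : ℕ → Ω → ℝ) : Prop :=
  ∀ z ∈ Finset.Icc 1 J, ∀ g ∈ Finset.Icc (J - z + 1) J, ∀ g' ∈ Finset.Icc (J - z + 1) J,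
    (fun ω => (P[fun ω' => Y z ω' * indG J S g ω' | mX X]) ω * eg P X J S g' ω)
      =ᵐ[P] fun ω => (P[fun ω' => Y z ω' * indG J S g' ω' | mX X]) ω * eg P X J S g ω

/-- Positivity : the principal scores are uniformly bounded away from zero. -/
def Positivity (P : Measure Ω) (J : ℕ) (X : Ω → 𝒳) (S : ℕ → Ω → ℝ) : Prop :=
  ∃ c : ℝ, 0 < c ∧ ∀ z ∈ Finset.Icc 1 J, ∀ᵐ ω ∂P, c ≤ pscore P X S J z ω

/-- Basic setup with bounded potential outcomes (observational setting). -/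
structure SetupB (P : Measure Ω) (J : ℕ) (X : Ω → 𝒳) (Z : Ω → ℕ)
    (S Y : ℕ → Ω → ℝ) : Prop where
  hJ : 2 ≤ J
  hX : Measurable X
  hZ : Measurable Z
  hZr : ∀ ω, Z ω ∈ Finset.Icc 1 J
  hSm : ∀ z, Measurable (S z)
  hS01 : ∀ z ω, S z ω = 0 ∨ S z ω = 1
  hYm : ∀ z, Measurable (Y z)
  hYbd : ∃ C, ∀ z ω, |Y z ω| ≤ C

/-- Generalized propensity score `π_z(X) := E[1(Z=z) | σ(X)]`. -/
def piX (P : Measure Ω) (X : Ω → 𝒳) (Z : Ω → ℕ) (z : ℕ) : Ω → ℝ :=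
  P[indic Z z | mX X]

/-- Treatment ignorability in the observational setting: the generalized propensity scores
are bounded away from zero, and conditionally on `σ(X)` the treatment indicator factorizes
from any bounded measurable functional of the potential values. -/
def TreatmentIgnorability (P : Measure Ω) (J : ℕ) (X : Ω → 𝒳) (Z : Ω → ℕ)
    (S Y : ℕ → Ω → ℝ) : Prop :=
  (∃ c : ℝ, 0 < c ∧ ∀ z ∈ Finset.Icc 1 J, ∀ᵐ ω ∂P, c ≤ piX P X Z z ω) ∧
  ∀ z ∈ Finset.Icc 1 J, ∀ φ : (ℕ → ℝ) → (ℕ → ℝ) → ℝ,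
    Measurable (Function.uncurry φ) → (∃ C, ∀ s y, |φ s y| ≤ C) →
    P[fun ω => indic Z z ω * φ (fun w => S w ω) (fun w => Y w ω) | mX X]
      =ᵐ[P] fun ω => piX P X Z z ω
        * (P[fun ω' => φ (fun w => S w ω') (fun w => Y w ω') | mX X]) ω

/-- Working principal score `p̃_w(X)`, with the convention `p̃_0 := 0`. -/
def workP (X : Ω → 𝒳) (pt : ℕ → 𝒳 → ℝ) (w : ℕ) : Ω → ℝ :=
  if w = 0 then fun _ => 0 else fun ω => pt w (X ω)

/-- Augmented survival term built from working principal scores and working propensity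
scores, with `ψ̃_{S,0} := 0`. -/
def psiSWO (P : Measure Ω) (X : Ω → 𝒳) (Z : Ω → ℕ) (S : ℕ → Ω → ℝ) (J : ℕ)
    (pt πt : ℕ → 𝒳 → ℝ) (w : ℕ) : Ω → ℝ :=
  if w = 0 then fun _ => 0
  else fun ω =>
    indic Z w ω * (Sobs J Z S ω - workP X pt w ω) / πt w (X ω) + workP X pt w ω

/-- bounded a.e.-strongly-measurable functions are integrable wrt a finite measure -/
lemma integrable_of_bdd [MeasurableSpace Ω] {P : Measure Ω} [IsFiniteMeasure P] {f : Ω → ℝ} (C : ℝ)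
    (hfm : AEStronglyMeasurable f P) (hfb : ∀ ω, |f ω| ≤ C) : Integrable f P :=
  ⟨hfm, HasFiniteIntegral.of_bounded (C := C) (Filter.Eventually.of_forall hfb)⟩

/-- pull-out: for bounded `m`-measurable `f` and integrable `W` with `P[W|m] =ᵐ V`,
`∫ f·W = ∫ f·V`. -/
lemma pull_eq {m0 : MeasurableSpace Ω} {P : Measure Ω} [IsProbabilityMeasure P]
    {m : MeasurableSpace Ω} (hm : m ≤ m0) {f W V : Ω → ℝ}
    (hfm : StronglyMeasurable[m] f) (C : ℝ) (hfb : ∀ ω, |f ω| ≤ C)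
    (hW : Integrable W P) (hV : P[W|m] =ᵐ[P] V) :
    ∫ ω, f ω * W ω ∂P = ∫ ω, f ω * V ω ∂P := by
  have hfae : AEStronglyMeasurable[m0] f P := StronglyMeasurable.aestronglyMeasurable (StronglyMeasurable.mono (m := m0) hfm hm)
  have hfW : Integrable (fun ω => f ω * W ω) P :=
    hW.bdd_mul hfae (c := C) (Filter.Eventually.of_forall fun ω => by simpa using hfb ω)
  have h1 : ∫ ω, f ω * W ω ∂P = ∫ ω, (P[fun ω => f ω * W ω|m]) ω ∂P :=
    (integral_condExp hm).symm
  have h2 : P[fun ω => f ω * W ω|m] =ᵐ[P] fun ω => f ω * (P[W|m]) ω := by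
    exact condExp_mul_of_stronglyMeasurable_left hfm hfW hW
  rw [h1, integral_congr_ae (h2.trans (Filter.EventuallyEq.mul (Filter.EventuallyEq.refl _ f) hV))]; rfl

/-- cancel a positive a.e. factor on the right -/
lemma ae_cancel_right [MeasurableSpace Ω] {P : Measure Ω} {f g h : Ω → ℝ} {c : ℝ} (hc : 0 < c)
    (hh : ∀ᵐ ω ∂P, c ≤ h ω)
    (heq : (fun ω => f ω * h ω) =ᵐ[P] fun ω => g ω * h ω) : f =ᵐ[P] g := by
  filter_upwards [hh, heq] with ω h1 h2
  exact mul_right_cancel₀ (by intro h0; rw [h0] at h1; linarith : h ω ≠ 0) h2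

/-- counting lemma for monotone 0/1 sequences -/
lemma count_ones (J : ℕ) (f : ℕ → ℝ) (h01 : ∀ w, f w = 0 ∨ f w = 1)
    (hmono : ∀ w ∈ Finset.Icc 1 J, ∀ w' ∈ Finset.Icc 1 J, w' ≤ w → f w' ≤ f w) :
    ∃ n : ℕ, n ≤ J ∧ (∑ u ∈ Finset.Icc 1 J, f u) = n ∧
      ∀ w ∈ Finset.Icc 1 J, f w = if J - n < w then 1 else 0 := by
  classical
  set T : Finset ℕ := (Finset.Icc 1 J).filter (fun w => f w = 1) with hT
  refine ⟨T.card, ?_, ?_, ?_⟩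
  · calc T.card ≤ (Finset.Icc 1 J).card := Finset.card_filter_le _ _
      _ = J := by rw [Nat.card_Icc]; omega
  · rw [← Finset.sum_filter_add_sum_filter_not (Finset.Icc 1 J) (fun w => f w = 1) f]
    have e1 : ∑ u ∈ T, f u = (T.card : ℝ) := by
      rw [Finset.sum_congr rfl (fun u hu => (Finset.mem_filter.mp hu).2)]
      simp [hT]
    have e2 : ∑ u ∈ (Finset.Icc 1 J).filter (fun w => ¬ f w = 1), f u = 0 := by
      refine Finset.sum_eq_zero fun u hu => ?_
      rcases h01 u with h | h
      · exact h
      · exact absurd h (Finset.mem_filter.mp hu).2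
    rw [e1, e2, add_zero]
  · intro w hw
    have hwJ := Finset.mem_Icc.mp hw
    have hcard : T.card ≤ J := by
      calc T.card ≤ (Finset.Icc 1 J).card := Finset.card_filter_le _ _
        _ = J := by rw [Nat.card_Icc]; omega
    by_cases hfw : f w = 1
    · have hsub : Finset.Icc w J ⊆ T := by
        intro u hu
        have huJ := Finset.mem_Icc.mp hu
        refine Finset.mem_filter.mpr ⟨Finset.mem_Icc.mpr ⟨by omega, huJ.2⟩, ?_⟩
        have := hmono u (Finset.mem_Icc.mpr ⟨by omega, huJ.2⟩) w hw huJ.1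
        rcases h01 u with h | h
        · rw [hfw] at this; rw [h] at this; norm_num at this
        · exact h
      have := Finset.card_le_card hsub
      rw [Nat.card_Icc] at this
      rw [hfw, if_pos (by omega)]
    · have hf0 : f w = 0 := (h01 w).resolve_right hfw
      have hsub : T ⊆ Finset.Icc (w+1) J := by
        intro u hu
        obtain ⟨huIcc, hfu⟩ := Finset.mem_filter.mp hu
        have huJ := Finset.mem_Icc.mp huIcc
        refine Finset.mem_Icc.mpr ⟨?_, huJ.2⟩
        by_contra hlt
        have hule : u ≤ w := by omega
        have := hmono w hw u huIcc hule
        rw [hfu, hf0] at this; norm_num at this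
      have := Finset.card_le_card hsub
      rw [Nat.card_Icc] at this
      rw [hf0, if_neg (by omega)]


lemma abs_div_le_of {a q c cq : ℝ} (ha : |a| ≤ c) (h1 : 0 < cq) (h2 : cq ≤ q) :
    |a / q| ≤ c / cq := by
  rw [abs_div]
  exact div_le_div₀ (le_trans (abs_nonneg _) ha) ha h1
    (by rw [abs_of_pos (lt_of_lt_of_le h1 h2)]; exact h2)

/-- **population triple robustness.** If at least two of the three groups of
working models (propensity scores, principal scores, outcome regression) are correct, then
`E[ξ̃] = E[Y_z·1(G=g)]` and `E[ψ̃_{S,J−g+1} − ψ̃_{S,J−g}] = P(G=g)`. -/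
theorem statement13 (P : Measure Ω) [IsProbabilityMeasure P] (J : ℕ)
    (X : Ω → 𝒳) (Z : Ω → ℕ) (S Y : ℕ → Ω → ℝ)
    (hset : SetupB P J X Z S Y)
    (hTI : TreatmentIgnorability P J X Z S Y)
    (hmono : Monotonicity P J S)
    (hPI : PrincipalIgnorability P J X S Y)
    (hpos : Positivity P J X S)
    (z g : ℕ) (hz : z ∈ Finset.Icc 1 J) (hg : g ∈ Finset.Icc (J - z + 1) J)
    (mz : Ω → ℝ) (hmzm : Measurable[mX X] mz)
    (hmz : (fun ω => mz ω * piX P X Z z ω * pscore P X S J z ω)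
      =ᵐ[P] P[fun ω => Yobs J Z Y ω * Sobs J Z S ω * indic Z z ω | mX X])
    (cw : ℝ) (hcw : 0 < cw ∧ cw < 1 / 2)
    (πt pt : ℕ → 𝒳 → ℝ) (mt : 𝒳 → ℝ)
    (hπtm : ∀ w ∈ ({J - g, J - g + 1, z} : Set ℕ), Measurable (πt w))
    (hπtb : ∀ w ∈ ({J - g, J - g + 1, z} : Set ℕ), w ≠ 0 →
      ∀ x, πt w x ∈ Set.Icc cw (1 - cw))
    (hptm : ∀ w ∈ ({J - g, J - g + 1, z} : Set ℕ), Measurable (pt w))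
    (hptb : ∀ w ∈ ({J - g, J - g + 1, z} : Set ℕ), w ≠ 0 →
      ∀ x, pt w x ∈ Set.Icc cw (1 - cw))
    (hmtm : Measurable mt) (hmtb : ∃ C, ∀ x, |mt x| ≤ C)
    (htwo :
      ((∀ w ∈ ({J - g, J - g + 1, z} : Set ℕ), w ≠ 0 →
          (fun ω => πt w (X ω)) =ᵐ[P] piX P X Z w) ∧
        (∀ w ∈ ({J - g, J - g + 1, z} : Set ℕ), workP X pt w =ᵐ[P] pscore P X S J w)) ∨
      ((∀ w ∈ ({J - g, J - g + 1, z} : Set ℕ), w ≠ 0 →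
          (fun ω => πt w (X ω)) =ᵐ[P] piX P X Z w) ∧
        ((fun ω => mt (X ω)) =ᵐ[P] mz)) ∨
      ((∀ w ∈ ({J - g, J - g + 1, z} : Set ℕ), workP X pt w =ᵐ[P] pscore P X S J w) ∧
        ((fun ω => mt (X ω)) =ᵐ[P] mz))) :
    (∫ ω,
        ((workP X pt (J - g + 1) ω - workP X pt (J - g) ω) / workP X pt z ω
            * (indic Z z ω * Sobs J Z S ω * (Yobs J Z Y ω - mt (X ω)) / πt z (X ω))
          + mt (X ω)
            * (psiSWO P X Z S J pt πt (J - g + 1) ω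
              - psiSWO P X Z S J pt πt (J - g) ω)) ∂P
      = ∫ ω, Y z ω * indG J S g ω ∂P) ∧
    (∫ ω, (psiSWO P X Z S J pt πt (J - g + 1) ω - psiSWO P X Z S J pt πt (J - g) ω) ∂P
      = (P {ω | Gsum J S ω = (g : ℝ)}).toReal) := by
  classical
  obtain ⟨hcw0, hcw2⟩ := hcw
  obtain ⟨C0, hC0⟩ := hset.hYbd
  obtain ⟨Cm, hCm⟩ := hmtb
  set C : ℝ := max C0 0 with hCdef
  have hYC : ∀ w ω, |Y w ω| ≤ C := fun w ω => le_trans (hC0 w ω) (le_max_left _ _)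
  have hCnn : (0:ℝ) ≤ C := le_max_right _ _
  have hΩ : Nonempty Ω := by
    by_contra h
    rw [not_nonempty_iff] at h
    have h1 := measure_univ (μ := P)
    rw [Set.univ_eq_empty_iff.mpr h, measure_empty] at h1
    exact zero_ne_one h1
  have hCmnn : (0:ℝ) ≤ Cm := le_trans (abs_nonneg _) (hCm (X hΩ.some))
  have hm : mX X ≤ (inferInstance : MeasurableSpace Ω) := measurable_iff_comap_le.mp hset.hX
  have hXmX : Measurable[mX X] X := measurable_iff_comap_le.mpr le_rfl
  obtain ⟨hz1, hzJ⟩ := Finset.mem_Icc.mp hz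
  obtain ⟨hgz, hgJ⟩ := Finset.mem_Icc.mp hg
  have hg1 : 1 ≤ g := by omega
  set w1 := J - g + 1 with hw1def
  set w0 := J - g with hw0def
  have hw1mem : w1 ∈ Finset.Icc 1 J := Finset.mem_Icc.mpr ⟨by omega, by omega⟩
  have hw0mem : w0 ≠ 0 → w0 ∈ Finset.Icc 1 J := fun h => Finset.mem_Icc.mpr ⟨by omega, by omega⟩
  have hzne : z ≠ 0 := by omega
  have hw1ne : w1 ≠ 0 := by omega
  have hmem0 : w0 ∈ ({w0, w1, z} : Set ℕ) := by simp
  have hmem1 : w1 ∈ ({w0, w1, z} : Set ℕ) := by simp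
  have hmemz : z ∈ ({w0, w1, z} : Set ℕ) := by simp
  -- basic measurability and bounds
  have hindicm : ∀ w, Measurable (indic Z w) := fun w => by
    have hs : MeasurableSet {ω | Z ω = w} := hset.hZ (measurableSet_singleton w)
    exact Measurable.ite hs measurable_const measurable_const
  have hindicb : ∀ w ω, |indic Z w ω| ≤ 1 := by
    intro w ω; simp only [indic]; split <;> norm_num
  have hS01' : ∀ w ω, |S w ω| ≤ 1 := fun w ω => by
    rcases hset.hS01 w ω with h | h <;> rw [h] <;> norm_num
  have hSobsm : Measurable (Sobs J Z S) :=
    Finset.measurable_sum _ fun w _ => (hindicm w).mul (hset.hSm w)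
  have hYobsm : Measurable (Yobs J Z Y) :=
    Finset.measurable_sum _ fun w _ => (hindicm w).mul (hset.hYm w)
  have hSobs_eq : ∀ ω, Sobs J Z S ω = S (Z ω) ω := by
    intro ω
    rw [Sobs, Finset.sum_eq_single_of_mem (Z ω) (hset.hZr ω)]
    · rw [indic, if_pos rfl, one_mul]
    · intro b _ hb; rw [indic, if_neg fun h => hb h.symm, zero_mul]
  have hYobs_eq : ∀ ω, Yobs J Z Y ω = Y (Z ω) ω := by
    intro ω
    rw [Yobs, Finset.sum_eq_single_of_mem (Z ω) (hset.hZr ω)]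
    · rw [indic, if_pos rfl, one_mul]
    · intro b _ hb; rw [indic, if_neg fun h => hb h.symm, zero_mul]
  have hSobsb : ∀ ω, |Sobs J Z S ω| ≤ 1 := fun ω => by rw [hSobs_eq]; exact hS01' _ _
  have hYobsb : ∀ ω, |Yobs J Z Y ω| ≤ C := fun ω => by rw [hYobs_eq]; exact hYC _ _
  have hpscore_eq : ∀ w ∈ Finset.Icc 1 J, pscore P X S J w = P[S w|mX X] := by
    intro w hw
    obtain ⟨h1, h2⟩ := Finset.mem_Icc.mp hw
    rw [pscore, if_neg (by omega), if_neg (by omega)]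
  have hSint : ∀ w, Integrable (S w) P := fun w =>
    integrable_of_bdd 1 (hset.hSm w).aestronglyMeasurable (hS01' w)
  have hW1m : ∀ w, Measurable (fun ω => indic Z w ω * Sobs J Z S ω) :=
    fun w => (hindicm w).mul hSobsm
  have hW1b : ∀ w ω, |indic Z w ω * Sobs J Z S ω| ≤ 1 := fun w ω => by
    rw [abs_mul]
    calc |indic Z w ω| * |Sobs J Z S ω| ≤ 1 * 1 :=
      mul_le_mul (hindicb w ω) (hSobsb ω) (abs_nonneg _) zero_le_one
    _ = 1 := one_mul 1
  have hW1int : ∀ w, Integrable (fun ω => indic Z w ω * Sobs J Z S ω) P :=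
    fun w => integrable_of_bdd 1 (hW1m w).aestronglyMeasurable (hW1b w)
  have hindicint : ∀ w, Integrable (indic Z w) P :=
    fun w => integrable_of_bdd 1 (hindicm w).aestronglyMeasurable (hindicb w)
  have hW3m : Measurable (fun ω => indic Z z ω * Sobs J Z S ω * Yobs J Z Y ω) :=
    ((hindicm z).mul hSobsm).mul hYobsm
  have hW3b : ∀ ω, |indic Z z ω * Sobs J Z S ω * Yobs J Z Y ω| ≤ C := fun ω => by
    rw [abs_mul]
    calc |indic Z z ω * Sobs J Z S ω| * |Yobs J Z Y ω| ≤ 1 * C :=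
      mul_le_mul (hW1b z ω) (hYobsb ω) (abs_nonneg _) zero_le_one
    _ = C := one_mul C
  have hW3int : Integrable (fun ω => indic Z z ω * Sobs J Z S ω * Yobs J Z Y ω) P :=
    integrable_of_bdd C hW3m.aestronglyMeasurable hW3b
  -- bounds for the working models
  have hπlb : ∀ w ∈ ({w0, w1, z} : Set ℕ), w ≠ 0 → ∀ x, cw ≤ πt w x :=
    fun w hw hne x => (hπtb w hw hne x).1
  have hπub1 : ∀ w ∈ ({w0, w1, z} : Set ℕ), w ≠ 0 → ∀ x, |πt w x| ≤ 1 := by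
    intro w hw hne x
    obtain ⟨h1, h2⟩ := hπtb w hw hne x
    rw [abs_of_pos (lt_of_lt_of_le hcw0 h1)]; linarith
  have hptlb : ∀ w ∈ ({w0, w1, z} : Set ℕ), w ≠ 0 → ∀ x, cw ≤ pt w x :=
    fun w hw hne x => (hptb w hw hne x).1
  have hptub1 : ∀ w ∈ ({w0, w1, z} : Set ℕ), w ≠ 0 → ∀ x, |pt w x| ≤ 1 := by
    intro w hw hne x
    obtain ⟨h1, h2⟩ := hptb w hw hne x
    rw [abs_of_pos (lt_of_lt_of_le hcw0 h1)]; linarith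
  have hworkm : ∀ w ∈ ({w0, w1, z} : Set ℕ), Measurable (workP X pt w) := by
    intro w hw
    by_cases h : w = 0
    · simp only [workP, if_pos h]; exact measurable_const
    · simp only [workP, if_neg h]; exact (hptm w hw).comp hset.hX
  have hworkmX : ∀ w ∈ ({w0, w1, z} : Set ℕ), Measurable[mX X] (workP X pt w) := by
    intro w hw
    by_cases h : w = 0
    · simp only [workP, if_pos h]; exact measurable_const
    · simp only [workP, if_neg h]; exact (hptm w hw).comp hXmX
  have hworkb1 : ∀ w ∈ ({w0, w1, z} : Set ℕ), ∀ ω, |workP X pt w ω| ≤ 1 := by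
    intro w hw ω
    by_cases h : w = 0
    · simp [workP, if_pos h]
    · simp only [workP, if_neg h]; exact hptub1 w hw h (X ω)
  have hworklbz : ∀ ω, cw ≤ workP X pt z ω := by
    intro ω; simp only [workP, if_neg hzne]; exact hptlb z hmemz hzne (X ω)
  -- TI consequence: E[1(Z=w)·S | X] = π_w(X)·p_w(X)
  have hW1V : ∀ w ∈ Finset.Icc 1 J,
      P[fun ω => indic Z w ω * Sobs J Z S ω|mX X]
        =ᵐ[P] fun ω => piX P X Z w ω * pscore P X S J w ω := by
    intro w hw
    have hφm : Measurable (Function.uncurry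
        (fun (s : ℕ → ℝ) (_ : ℕ → ℝ) => max 0 (min (s w) 1))) := by
      apply Measurable.max measurable_const
      exact Measurable.min ((measurable_pi_apply w).comp measurable_fst) measurable_const
    have hφb : ∃ Cb, ∀ (s y : ℕ → ℝ),
        |(fun (s : ℕ → ℝ) (_ : ℕ → ℝ) => max 0 (min (s w) 1)) s y| ≤ Cb := by
      refine ⟨1, fun s y => ?_⟩
      rw [abs_le]
      constructor
      · exact le_trans (by norm_num) (le_max_left (0:ℝ) (min (s w) 1))
      · exact max_le (by norm_num) (min_le_right _ _)
    have hφS : ∀ ω, (fun (s : ℕ → ℝ) (_ : ℕ → ℝ) => max 0 (min (s w) 1))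
        (fun u => S u ω) (fun u => Y u ω) = S w ω := by
      intro ω; rcases hset.hS01 w ω with h | h <;> simp [h]
    have hTIa := hTI.2 w hw _ hφm hφb
    have e1 : (fun ω => indic Z w ω * Sobs J Z S ω)
        = fun ω => indic Z w ω * (fun (s : ℕ → ℝ) (_ : ℕ → ℝ) => max 0 (min (s w) 1))
          (fun u => S u ω) (fun u => Y u ω) := by
      funext ω; rw [hφS]
      by_cases h : Z ω = w
      · rw [indic, if_pos h, one_mul, one_mul, hSobs_eq, h]
      · rw [indic, if_neg h, zero_mul, zero_mul]
    rw [e1]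
    refine hTIa.trans ?_
    have e2 : P[fun ω' => (fun (s : ℕ → ℝ) (_ : ℕ → ℝ) => max 0 (min (s w) 1))
        (fun u => S u ω') (fun u => Y u ω')|mX X] =ᵐ[P] P[S w|mX X] :=
      condExp_congr_ae (Filter.Eventually.of_forall hφS)
    filter_upwards [e2] with ω h2
    rw [h2, hpscore_eq w hw]
  -- from hmz : closed form of E[1(Z=z)·S·Y | X]
  have hV3 : P[fun ω => indic Z z ω * Sobs J Z S ω * Yobs J Z Y ω|mX X]
      =ᵐ[P] fun ω => mz ω * piX P X Z z ω * pscore P X S J z ω := by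
    refine (condExp_congr_ae (Filter.Eventually.of_forall fun ω => ?_)).trans hmz.symm
    show indic Z z ω * Sobs J Z S ω * Yobs J Z Y ω
      = Yobs J Z Y ω * Sobs J Z S ω * indic Z z ω
    ring
  -- E[S_z·Y_z | X] = m_z(X)·p_z(X)
  have hSYcond : P[fun ω => S z ω * Y z ω|mX X]
      =ᵐ[P] fun ω => mz ω * pscore P X S J z ω := by
    have hφm : Measurable (Function.uncurry
        (fun (s : ℕ → ℝ) (y : ℕ → ℝ) => max 0 (min (s z) 1) * max (-C) (min (y z) C))) := by
      apply Measurable.mul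
      · exact Measurable.max measurable_const
          (Measurable.min ((measurable_pi_apply z).comp measurable_fst) measurable_const)
      · exact Measurable.max measurable_const
          (Measurable.min ((measurable_pi_apply z).comp measurable_snd) measurable_const)
    have hφb : ∃ Cb, ∀ (s y : ℕ → ℝ),
        |(fun (s : ℕ → ℝ) (y : ℕ → ℝ) => max 0 (min (s z) 1) * max (-C) (min (y z) C)) s y|
          ≤ Cb := by
      refine ⟨C, fun s y => ?_⟩
      have h1 : |max 0 (min (s z) 1)| ≤ 1 := by
        rw [abs_le]
        exact ⟨le_trans (by norm_num) (le_max_left _ _), max_le (by norm_num) (min_le_right _ _)⟩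
      have h2 : |max (-C) (min (y z) C)| ≤ C := by
        rw [abs_le]
        exact ⟨le_max_left _ _, max_le (by linarith) (min_le_right _ _)⟩
      calc |max 0 (min (s z) 1) * max (-C) (min (y z) C)|
          = |max 0 (min (s z) 1)| * |max (-C) (min (y z) C)| := abs_mul _ _
        _ ≤ 1 * C := mul_le_mul h1 h2 (abs_nonneg _) zero_le_one
        _ = C := one_mul C
    have hφSY : ∀ ω, (fun (s : ℕ → ℝ) (y : ℕ → ℝ)
        => max 0 (min (s z) 1) * max (-C) (min (y z) C))
        (fun u => S u ω) (fun u => Y u ω) = S z ω * Y z ω := by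
      intro ω
      have h2 : max (-C) (min (Y z ω) C) = Y z ω := by
        have h3 := hYC z ω; rw [abs_le] at h3
        rw [min_eq_left h3.2, max_eq_right h3.1]
      rcases hset.hS01 z ω with h | h <;> simp [h, h2]
    have hTIa := hTI.2 z hz _ hφm hφb
    have e1 : (fun ω => indic Z z ω * (fun (s : ℕ → ℝ) (y : ℕ → ℝ)
        => max 0 (min (s z) 1) * max (-C) (min (y z) C)) (fun u => S u ω) (fun u => Y u ω))
        = fun ω => Yobs J Z Y ω * Sobs J Z S ω * indic Z z ω := by
      funext ω; rw [hφSY]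
      by_cases h : Z ω = z
      · rw [indic, if_pos h, one_mul, mul_one, hSobs_eq, hYobs_eq, h]; ring
      · rw [indic, if_neg h, zero_mul, mul_zero]
    rw [e1] at hTIa
    have e2 : P[fun ω' => (fun (s : ℕ → ℝ) (y : ℕ → ℝ)
        => max 0 (min (s z) 1) * max (-C) (min (y z) C))
        (fun u => S u ω') (fun u => Y u ω')|mX X]
        =ᵐ[P] P[fun ω => S z ω * Y z ω|mX X] :=
      condExp_congr_ae (Filter.Eventually.of_forall hφSY)
    obtain ⟨cπ, hcπ0, hcπ⟩ := hTI.1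
    have e3 : (fun ω => (mz ω * pscore P X S J z ω) * piX P X Z z ω)
        =ᵐ[P] fun ω => (P[fun ω => S z ω * Y z ω|mX X]) ω * piX P X Z z ω := by
      have e4 := hmz.trans (hTIa.trans
        (Filter.EventuallyEq.mul (Filter.EventuallyEq.refl _ _) e2))
      filter_upwards [e4] with ω h4
      calc (mz ω * pscore P X S J z ω) * piX P X Z z ω
          = mz ω * piX P X Z z ω * pscore P X S J z ω := by ring
        _ = piX P X Z z ω * (P[fun ω => S z ω * Y z ω|mX X]) ω := h4
        _ = (P[fun ω => S z ω * Y z ω|mX X]) ω * piX P X Z z ω := by ring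
    exact (ae_cancel_right hcπ0 (hcπ z hz) e3).symm
  -- a.e. monotonicity over all pairs
  have hgood : ∀ᵐ ω ∂P, ∀ w ∈ (↑(Finset.Icc 1 J) : Set ℕ),
      ∀ w' ∈ (↑(Finset.Icc 1 J) : Set ℕ), w' ≤ w → S w' ω ≤ S w ω := by
    rw [ae_ball_iff (Finset.Icc 1 J).countable_toSet]
    intro w hw
    rw [ae_ball_iff (Finset.Icc 1 J).countable_toSet]
    intro w' hw'
    by_cases hle : w' ≤ w
    · filter_upwards [hmono w (Finset.mem_coe.mp hw) w' (Finset.mem_coe.mp hw') hle] with ω h _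
      exact h
    · filter_upwards with ω h; exact absurd h hle
  have hKey : ∀ᵐ ω ∂P, ∃ n : ℕ, n ≤ J ∧ Gsum J S ω = (n : ℝ) ∧
      ∀ w ∈ Finset.Icc 1 J, S w ω = if J - n < w then 1 else 0 := by
    filter_upwards [hgood] with ω hω
    exact count_ones J (fun w => S w ω) (fun w => hset.hS01 w ω)
      (fun w hw w' hw' h => hω w (Finset.mem_coe.mpr hw) w' (Finset.mem_coe.mpr hw') h)
  have hindG_apply : ∀ h ω, indG J S h ω = if Gsum J S ω = (h:ℝ) then 1 else 0 := by
    intro h ω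
    rw [indG, Set.indicator_apply]
    simp only [Set.mem_setOf_eq]
  -- a.e. pointwise: 1(G=g) = S_{J-g+1} - S_{J-g}
  have hi : ∀ᵐ ω ∂P, indG J S g ω = S w1 ω - (if w0 = 0 then 0 else S w0 ω) := by
    filter_upwards [hKey] with ω hω
    obtain ⟨n, hnJ, hGn, hS⟩ := hω
    have h1 : S w1 ω = if J - n < w1 then 1 else 0 := hS w1 hw1mem
    have hind : indG J S g ω = if n = g then 1 else 0 := by
      rw [hindG_apply g ω, hGn]
      by_cases h : n = g
      · rw [if_pos (by exact_mod_cast congrArg (Nat.cast : ℕ → ℝ) h), if_pos h]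
      · rw [if_neg (fun hc => h (Nat.cast_injective hc)), if_neg h]
    by_cases h0 : w0 = 0
    · rw [hind, h1, if_pos h0, sub_zero]
      by_cases hng : n = g
      · rw [if_pos hng, if_pos (by omega)]
      · rw [if_neg hng, if_neg (by omega)]
    · have h0' : S w0 ω = if J - n < w0 then 1 else 0 := hS w0 (hw0mem h0)
      rw [hind, h1, if_neg h0, h0']
      have e1 : (J - n < w1) ↔ g ≤ n := by omega
      have e0 : (J - n < w0) ↔ g < n := by omega
      rcases Nat.lt_trichotomy n g with h | h | h
      · rw [if_neg (by omega), if_neg (by omega), if_neg (by omega)]; norm_num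
      · rw [if_pos h, if_pos (by omega), if_neg (by omega)]; norm_num
      · rw [if_neg (by omega), if_pos (by omega), if_pos (by omega)]; norm_num
  -- a.e. pointwise: S_z = ∑_{g' ≥ J-z+1} 1(G=g')
  have hii : ∀ᵐ ω ∂P, S z ω = ∑ g' ∈ Finset.Icc (J - z + 1) J, indG J S g' ω := by
    filter_upwards [hKey] with ω hω
    obtain ⟨n, hnJ, hGn, hS⟩ := hω
    have hSz := hS z hz
    have hsum : ∑ g' ∈ Finset.Icc (J - z + 1) J, indG J S g' ω
        = if n ∈ Finset.Icc (J - z + 1) J then 1 else 0 := by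
      have e : ∀ g' ∈ Finset.Icc (J - z + 1) J,
          indG J S g' ω = if n = g' then (1:ℝ) else 0 := by
        intro g' _
        rw [hindG_apply g' ω, hGn]
        by_cases h : n = g'
        · rw [if_pos (by exact_mod_cast congrArg (Nat.cast : ℕ → ℝ) h), if_pos h]
        · rw [if_neg (fun hc => h (Nat.cast_injective hc)), if_neg h]
      rw [Finset.sum_congr rfl e, Finset.sum_ite_eq]
    rw [hSz, hsum]
    simp only [Finset.mem_Icc]
    by_cases h : J - n < z
    · rw [if_pos h, if_pos (by omega)]
    · rw [if_neg h, if_neg (by omega)]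
  -- e_g(X) = p_{J-g+1}(X) - p_{J-g}(X) a.e.
  have hpscore0 : pscore P X S J 0 = fun _ => (0:ℝ) := by rw [pscore, if_pos rfl]
  have hEg : eg P X J S g =ᵐ[P] fun ω => pscore P X S J w1 ω - pscore P X S J w0 ω := by
    have h2 : P[indG J S g|mX X]
        =ᵐ[P] P[fun ω => S w1 ω - (if w0 = 0 then 0 else S w0 ω)|mX X] :=
      condExp_congr_ae hi
    by_cases h0 : w0 = 0
    · have h3' : (fun ω => S w1 ω - (if w0 = 0 then (0:ℝ) else S w0 ω)) =ᵐ[P] S w1 := by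
        filter_upwards with ω
        rw [if_pos h0, sub_zero]
      have h3 : P[fun ω => S w1 ω - (if w0 = 0 then 0 else S w0 ω)|mX X]
          =ᵐ[P] P[S w1|mX X] := condExp_congr_ae h3'
      refine (h2.trans h3).trans ?_
      rw [hpscore_eq w1 hw1mem, h0, hpscore0]
      filter_upwards with ω
      simp
    · have h3' : (fun ω => S w1 ω - (if w0 = 0 then (0:ℝ) else S w0 ω))
          =ᵐ[P] fun ω => S w1 ω - S w0 ω := by
        filter_upwards with ω
        rw [if_neg h0]
      have h3 : P[fun ω => S w1 ω - (if w0 = 0 then 0 else S w0 ω)|mX X]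
          =ᵐ[P] P[fun ω => S w1 ω - S w0 ω|mX X] := condExp_congr_ae h3'
      have h4 : P[fun ω => S w1 ω - S w0 ω|mX X]
          =ᵐ[P] fun ω => (P[S w1|mX X]) ω - (P[S w0|mX X]) ω := by
        have := condExp_sub (m := mX X) (μ := P) (hSint w1) (hSint w0)
        filter_upwards [this] with ω h; exact h
      refine ((h2.trans h3).trans h4).trans ?_
      rw [hpscore_eq w1 hw1mem, hpscore_eq w0 (hw0mem h0)]
  -- principal ignorability: E[Y_z·1(G=g) | X] = m_z(X)·e_g(X) a.e.
  have hA : (P[fun ω' => Y z ω' * indG J S g ω'|mX X])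
      =ᵐ[P] fun ω => mz ω * eg P X J S g ω := by
    have hindGm : ∀ h, Measurable (indG J S h) := by
      intro h
      have hGm : Measurable (Gsum J S) := Finset.measurable_sum _ fun w _ => hset.hSm w
      exact measurable_const.indicator (hGm (measurableSet_singleton ((h : ℝ))))
    have hindGint : ∀ h, Integrable (indG J S h) P := by
      intro h
      refine integrable_of_bdd 1 (hindGm h).aestronglyMeasurable fun ω => ?_
      rw [hindG_apply]; split <;> norm_num
    have hYindGint : ∀ h, Integrable (fun ω => Y z ω * indG J S h ω) P := by
      intro h
      refine integrable_of_bdd C ((hset.hYm z).mul (hindGm h)).aestronglyMeasurable fun ω => ?_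
      rw [abs_mul]
      calc |Y z ω| * |indG J S h ω| ≤ C * 1 := by
            refine mul_le_mul (hYC z ω) ?_ (abs_nonneg _) hCnn
            rw [hindG_apply]; split <;> norm_num
        _ = C := mul_one C
    -- sum of the strata scores equals the principal score
    have hsum_eg : (fun ω => ∑ g' ∈ Finset.Icc (J - z + 1) J, eg P X J S g' ω)
        =ᵐ[P] pscore P X S J z := by
      have h1 : (fun ω => ∑ g' ∈ Finset.Icc (J - z + 1) J, eg P X J S g' ω)
          =ᵐ[P] P[fun ω => ∑ g' ∈ Finset.Icc (J - z + 1) J, indG J S g' ω|mX X] := by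
        have h2 := condExp_finsetSum (m := mX X) (μ := P)
          (s := Finset.Icc (J - z + 1) J) (f := fun g' => indG J S g')
          (fun g' _ => hindGint g')
        have h3 : (fun ω => ∑ g' ∈ Finset.Icc (J - z + 1) J, indG J S g' ω)
            = ∑ g' ∈ Finset.Icc (J - z + 1) J, indG J S g' := by
          funext ω; rw [Finset.sum_apply]
        rw [h3]
        filter_upwards [h2] with ω h4
        rw [h4, Finset.sum_apply]
        rfl
      refine h1.trans ?_
      rw [hpscore_eq z hz]
      refine condExp_congr_ae ?_
      filter_upwards [hii] with ω h
      exact h.symm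
    -- sum of the conditional means equals E[Y_z·S_z | X]
    have hsum_A : (fun ω => ∑ g' ∈ Finset.Icc (J - z + 1) J,
        (P[fun ω' => Y z ω' * indG J S g' ω'|mX X]) ω)
        =ᵐ[P] P[fun ω => S z ω * Y z ω|mX X] := by
      have h2 := condExp_finsetSum (m := mX X) (μ := P)
        (s := Finset.Icc (J - z + 1) J)
        (f := fun g' => fun ω' => Y z ω' * indG J S g' ω')
        (fun g' _ => hYindGint g')
      have h3 : P[fun ω => S z ω * Y z ω|mX X]
          =ᵐ[P] P[∑ g' ∈ Finset.Icc (J - z + 1) J, (fun ω' => Y z ω' * indG J S g' ω')|mX X] := by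
        refine condExp_congr_ae ?_
        filter_upwards [hii] with ω h4
        rw [Finset.sum_apply]
        calc S z ω * Y z ω = Y z ω * S z ω := by ring
          _ = Y z ω * ∑ g' ∈ Finset.Icc (J - z + 1) J, indG J S g' ω := by rw [← h4]
          _ = ∑ g' ∈ Finset.Icc (J - z + 1) J, Y z ω * indG J S g' ω := Finset.mul_sum _ _ _
      refine Filter.EventuallyEq.trans ?_ (h3.trans h2).symm
      filter_upwards with ω
      rw [Finset.sum_apply]
    -- principal ignorability, summed over the strata
    have hPIae : ∀ᵐ ω ∂P, ∀ g' ∈ (↑(Finset.Icc (J - z + 1) J) : Set ℕ),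
        (P[fun ω' => Y z ω' * indG J S g ω'|mX X]) ω * eg P X J S g' ω
          = (P[fun ω' => Y z ω' * indG J S g' ω'|mX X]) ω * eg P X J S g ω := by
      rw [ae_ball_iff (Finset.Icc (J - z + 1) J).countable_toSet]
      intro g' hg'
      exact hPI z hz g hg g' (Finset.mem_coe.mp hg')
    obtain ⟨cp, hcp0, hcpz⟩ := hpos
    have e3 : (fun ω => (P[fun ω' => Y z ω' * indG J S g ω'|mX X]) ω * pscore P X S J z ω)
        =ᵐ[P] fun ω => (mz ω * eg P X J S g ω) * pscore P X S J z ω := by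
      filter_upwards [hPIae, hsum_eg, hsum_A, hSYcond] with ω h1 h2 h3 h4
      calc (P[fun ω' => Y z ω' * indG J S g ω'|mX X]) ω * pscore P X S J z ω
          = (P[fun ω' => Y z ω' * indG J S g ω'|mX X]) ω
            * ∑ g' ∈ Finset.Icc (J - z + 1) J, eg P X J S g' ω := by rw [h2]
        _ = ∑ g' ∈ Finset.Icc (J - z + 1) J,
            (P[fun ω' => Y z ω' * indG J S g ω'|mX X]) ω * eg P X J S g' ω :=
          Finset.mul_sum _ _ _
        _ = ∑ g' ∈ Finset.Icc (J - z + 1) J,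
            (P[fun ω' => Y z ω' * indG J S g' ω'|mX X]) ω * eg P X J S g ω :=
          Finset.sum_congr rfl fun g' hg' => h1 g' (Finset.mem_coe.mpr hg')
        _ = (∑ g' ∈ Finset.Icc (J - z + 1) J,
            (P[fun ω' => Y z ω' * indG J S g' ω'|mX X]) ω) * eg P X J S g ω :=
          (Finset.sum_mul _ _ _).symm
        _ = (P[fun ω => S z ω * Y z ω|mX X]) ω * eg P X J S g ω := by rw [h3]
        _ = (mz ω * pscore P X S J z ω) * eg P X J S g ω := by rw [h4]
        _ = (mz ω * eg P X J S g ω) * pscore P X S J z ω := by ring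
    exact ae_cancel_right hcp0 (hcpz z hz) e3
  -- closed form of E[ψ̃_{S,w} | X]
  set Vψ : ℕ → Ω → ℝ := fun w ω => if w = 0 then 0
    else piX P X Z w ω * (pscore P X S J w ω - pt w (X ω)) / πt w (X ω) + pt w (X ω)
    with hVψdef
  have hψ_eq : ∀ w, w ≠ 0 → psiSWO P X Z S J pt πt w
      = fun ω => indic Z w ω * (Sobs J Z S ω - pt w (X ω)) / πt w (X ω) + pt w (X ω) := by
    intro w hw
    simp only [psiSWO, workP, if_neg hw]
  have hψ0 : psiSWO P X Z S J pt πt 0 = fun _ => (0:ℝ) := by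
    simp [psiSWO]
  have hw0' : w0 = 0 ∨ w0 ∈ Finset.Icc 1 J := by
    by_cases h : w0 = 0
    · exact Or.inl h
    · exact Or.inr (hw0mem h)
  have hw1' : w1 = 0 ∨ w1 ∈ Finset.Icc 1 J := Or.inr hw1mem
  -- integrability of the closed forms
  have hVψint : ∀ w ∈ ({w0, w1, z} : Set ℕ), (w = 0 ∨ w ∈ Finset.Icc 1 J) →
      Integrable (Vψ w) P := by
    intro w hw hw'
    rcases hw' with h0 | hIcc
    · have : Vψ w = fun _ => (0:ℝ) := by
        funext ω; simp only [hVψdef, if_pos h0]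
      rw [this]; exact integrable_const 0
    · have hwne : w ≠ 0 := by
        obtain ⟨h1, _⟩ := Finset.mem_Icc.mp hIcc; omega
      have hππ : Integrable (fun ω => piX P X Z w ω * pscore P X S J w ω) P :=
        integrable_condExp.congr (hW1V w hIcc)
      have h1 : Integrable
          (fun ω => (πt w (X ω))⁻¹ * (piX P X Z w ω * pscore P X S J w ω)) P := by
        refine hππ.bdd_mul (((hπtm w hw).comp hset.hX).inv).aestronglyMeasurable
          (c := cw⁻¹) (Filter.Eventually.of_forall fun ω => ?_)
        rw [Real.norm_eq_abs, abs_inv, abs_of_pos (lt_of_lt_of_le hcw0 (hπlb w hw hwne (X ω)))]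
        exact inv_anti₀ hcw0 (hπlb w hw hwne (X ω))
      have h2 : Integrable (fun ω => (-(pt w (X ω)) / πt w (X ω)) * piX P X Z w ω) P := by
        refine (integrable_condExp : Integrable (P[indic Z w|mX X]) P).bdd_mul
          (Measurable.aestronglyMeasurable ?_) (c := 1 / cw) (Filter.Eventually.of_forall fun ω => ?_)
        · exact (((hptm w hw).comp hset.hX).neg).div ((hπtm w hw).comp hset.hX)
        · rw [Real.norm_eq_abs]
          exact abs_div_le_of (by rw [abs_neg]; exact hptub1 w hw hwne (X ω)) hcw0
            (hπlb w hw hwne (X ω))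
      have h3 : Integrable (fun ω => pt w (X ω)) P :=
        integrable_of_bdd 1 ((hptm w hw).comp hset.hX).aestronglyMeasurable
          (fun ω => hptub1 w hw hwne (X ω))
      refine ((h1.add h2).add h3).congr ?_
      filter_upwards with ω
      have hne : πt w (X ω) ≠ 0 := by
        have := hπlb w hw hwne (X ω); linarith
      simp only [hVψdef, if_neg hwne]
      simp only [Pi.add_apply]
      field_simp
      ring
  -- pull-out identity for ψ̃ terms
  have hpullψ : ∀ w ∈ ({w0, w1, z} : Set ℕ), (w = 0 ∨ w ∈ Finset.Icc 1 J) →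
      ∀ (h : Ω → ℝ) (Ch : ℝ), Measurable[mX X] h → (∀ ω, |h ω| ≤ Ch) →
      ∫ ω, h ω * psiSWO P X Z S J pt πt w ω ∂P = ∫ ω, h ω * Vψ w ω ∂P := by
    intro w hw hw' h Ch hhm hhb
    have hCh0 : 0 ≤ Ch := le_trans (abs_nonneg _) (hhb hΩ.some)
    rcases hw' with h0 | hIcc
    · have e0 : Vψ w = fun _ => (0:ℝ) := by
        funext ω; simp only [hVψdef, if_pos h0]
      have e0' : psiSWO P X Z S J pt πt w = fun _ => (0:ℝ) := by
        simp only [psiSWO, if_pos h0]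
      rw [e0, e0']
    · have hwne : w ≠ 0 := by
        obtain ⟨h1, _⟩ := Finset.mem_Icc.mp hIcc; omega
      have hπmX : Measurable[mX X] fun ω => πt w (X ω) := (hπtm w hw).comp hXmX
      have hptmX : Measurable[mX X] fun ω => pt w (X ω) := (hptm w hw).comp hXmX
      have hπamb : Measurable fun ω => πt w (X ω) := (hπtm w hw).comp hset.hX
      have hptamb : Measurable fun ω => pt w (X ω) := (hptm w hw).comp hset.hX
      have hambm : Measurable h := hhm.mono hm le_rfl
      -- decomposition into three elementary pieces
      have e1 : ∫ ω, h ω * psiSWO P X Z S J pt πt w ω ∂P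
          = ∫ ω, ((h ω / πt w (X ω)) * (indic Z w ω * Sobs J Z S ω)
            + ((-(h ω * pt w (X ω) / πt w (X ω))) * indic Z w ω
              + h ω * pt w (X ω))) ∂P := by
        refine integral_congr_ae (Filter.Eventually.of_forall fun ω => ?_)
        simp only [hψ_eq w hwne]
        ring
      have hb1 : ∀ ω, |h ω / πt w (X ω)| ≤ Ch / cw :=
        fun ω => abs_div_le_of (hhb ω) hcw0 (hπlb w hw hwne (X ω))
      have hb2 : ∀ ω, |(-(h ω * pt w (X ω) / πt w (X ω)))| ≤ Ch / cw := by
        intro ω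
        rw [abs_neg]
        refine abs_div_le_of ?_ hcw0 (hπlb w hw hwne (X ω))
        rw [abs_mul]
        calc |h ω| * |pt w (X ω)| ≤ Ch * 1 :=
          mul_le_mul (hhb ω) (hptub1 w hw hwne (X ω)) (abs_nonneg _) hCh0
        _ = Ch := mul_one Ch
      have hint1 : Integrable (fun ω => (h ω / πt w (X ω)) * (indic Z w ω * Sobs J Z S ω)) P := by
        refine integrable_of_bdd (Ch / cw) ((hambm.div hπamb).mul (hW1m w)).aestronglyMeasurable
          fun ω => ?_
        rw [abs_mul]
        calc |h ω / πt w (X ω)| * |indic Z w ω * Sobs J Z S ω| ≤ (Ch / cw) * 1 :=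
          mul_le_mul (hb1 ω) (hW1b w ω) (abs_nonneg _) (by positivity)
        _ = Ch / cw := mul_one _
      have hint2 : Integrable (fun ω => (-(h ω * pt w (X ω) / πt w (X ω))) * indic Z w ω) P := by
        refine integrable_of_bdd (Ch / cw)
          ((((hambm.mul hptamb).div hπamb).neg).mul (hindicm w)).aestronglyMeasurable fun ω => ?_
        rw [abs_mul]
        calc |(-(h ω * pt w (X ω) / πt w (X ω)))| * |indic Z w ω| ≤ (Ch / cw) * 1 :=
          mul_le_mul (hb2 ω) (hindicb w ω) (abs_nonneg _) (by positivity)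
        _ = Ch / cw := mul_one _
      have hint3 : Integrable (fun ω => h ω * pt w (X ω)) P := by
        refine integrable_of_bdd Ch (hambm.mul hptamb).aestronglyMeasurable fun ω => ?_
        rw [abs_mul]
        calc |h ω| * |pt w (X ω)| ≤ Ch * 1 :=
          mul_le_mul (hhb ω) (hptub1 w hw hwne (X ω)) (abs_nonneg _) hCh0
        _ = Ch := mul_one Ch
      -- pull the conditional expectations
      have p1 : ∫ ω, (h ω / πt w (X ω)) * (indic Z w ω * Sobs J Z S ω) ∂P
          = ∫ ω, (h ω / πt w (X ω)) * (piX P X Z w ω * pscore P X S J w ω) ∂P :=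
        pull_eq hm (hhm.div hπmX).stronglyMeasurable (Ch / cw) hb1 (hW1int w) (hW1V w hIcc)
      have p2 : ∫ ω, (-(h ω * pt w (X ω) / πt w (X ω))) * indic Z w ω ∂P
          = ∫ ω, (-(h ω * pt w (X ω) / πt w (X ω))) * piX P X Z w ω ∂P :=
        pull_eq hm ((hhm.mul hptmX).div hπmX).neg.stronglyMeasurable (Ch / cw) hb2
          (hindicint w) Filter.EventuallyEq.rfl
      -- integrability of the pulled pieces
      have hr1 : Integrable
          (fun ω => (h ω / πt w (X ω)) * (piX P X Z w ω * pscore P X S J w ω)) P := by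
        refine (integrable_condExp.congr (hW1V w hIcc)).bdd_mul
          (hambm.div hπamb).aestronglyMeasurable (c := Ch / cw) (Filter.Eventually.of_forall fun ω => ?_)
        rw [Real.norm_eq_abs]; exact hb1 ω
      have hr2 : Integrable (fun ω => (-(h ω * pt w (X ω) / πt w (X ω))) * piX P X Z w ω) P := by
        refine (integrable_condExp : Integrable (P[indic Z w|mX X]) P).bdd_mul
          (((hambm.mul hptamb).div hπamb).neg).aestronglyMeasurable (c := Ch / cw) (Filter.Eventually.of_forall fun ω => ?_)
        rw [Real.norm_eq_abs]; exact hb2 ω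
      calc ∫ ω, h ω * psiSWO P X Z S J pt πt w ω ∂P
          = ∫ ω, ((h ω / πt w (X ω)) * (indic Z w ω * Sobs J Z S ω)
            + ((-(h ω * pt w (X ω) / πt w (X ω))) * indic Z w ω
              + h ω * pt w (X ω))) ∂P := e1
        _ = (∫ ω, (h ω / πt w (X ω)) * (indic Z w ω * Sobs J Z S ω) ∂P)
            + ∫ ω, ((-(h ω * pt w (X ω) / πt w (X ω))) * indic Z w ω
              + h ω * pt w (X ω)) ∂P := integral_add hint1 (hint2.add hint3)
        _ = (∫ ω, (h ω / πt w (X ω)) * (indic Z w ω * Sobs J Z S ω) ∂P)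
            + ((∫ ω, (-(h ω * pt w (X ω) / πt w (X ω))) * indic Z w ω ∂P)
              + ∫ ω, h ω * pt w (X ω) ∂P) := by rw [integral_add hint2 hint3]
        _ = (∫ ω, (h ω / πt w (X ω)) * (piX P X Z w ω * pscore P X S J w ω) ∂P)
            + ((∫ ω, (-(h ω * pt w (X ω) / πt w (X ω))) * piX P X Z w ω ∂P)
              + ∫ ω, h ω * pt w (X ω) ∂P) := by rw [p1, p2]
        _ = (∫ ω, (h ω / πt w (X ω)) * (piX P X Z w ω * pscore P X S J w ω) ∂P)
            + ∫ ω, ((-(h ω * pt w (X ω) / πt w (X ω))) * piX P X Z w ω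
              + h ω * pt w (X ω)) ∂P := by rw [integral_add hr2 hint3]
        _ = ∫ ω, ((h ω / πt w (X ω)) * (piX P X Z w ω * pscore P X S J w ω)
            + ((-(h ω * pt w (X ω) / πt w (X ω))) * piX P X Z w ω
              + h ω * pt w (X ω))) ∂P := (integral_add hr1 (hr2.add hint3)).symm
        _ = ∫ ω, h ω * Vψ w ω ∂P := by
            refine integral_congr_ae (Filter.Eventually.of_forall fun ω => ?_)
            have hne : πt w (X ω) ≠ 0 := by
              have := hπlb w hw hwne (X ω); linarith
            simp only [hVψdef, if_neg hwne]
            field_simp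
            ring
  -- either the propensity models or the principal score models are correct
  have hπorp : (∀ w ∈ ({w0, w1, z} : Set ℕ), w ≠ 0 →
        (fun ω => πt w (X ω)) =ᵐ[P] piX P X Z w) ∨
      (∀ w ∈ ({w0, w1, z} : Set ℕ), workP X pt w =ᵐ[P] pscore P X S J w) := by
    rcases htwo with ⟨h, _⟩ | ⟨h, _⟩ | ⟨h, _⟩
    · exact Or.inl h
    · exact Or.inl h
    · exact Or.inr h
  -- in either case, the closed form of E[ψ̃_{S,w}|X] is the principal score
  have hVψp : ∀ w ∈ ({w0, w1, z} : Set ℕ), (w = 0 ∨ w ∈ Finset.Icc 1 J) →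
      Vψ w =ᵐ[P] pscore P X S J w := by
    intro w hw hw'
    rcases hw' with h0 | hIcc
    · subst h0
      filter_upwards with ω
      simp [hVψdef, hpscore0]
    · have hwne : w ≠ 0 := by obtain ⟨h1, _⟩ := Finset.mem_Icc.mp hIcc; omega
      rcases hπorp with hπc | hpc
      · filter_upwards [hπc w hw hwne] with ω e1
        simp only [hVψdef, if_neg hwne]
        rw [← e1]
        have hne : πt w (X ω) ≠ 0 := by
          have := hπlb w hw hwne (X ω); linarith
        field_simp
        ring
      · filter_upwards [hpc w hw] with ω e1
        have e2 : pt w (X ω) = pscore P X S J w ω := by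
          simpa [workP, if_neg hwne] using e1
        simp only [hVψdef, if_neg hwne, e2]
        simp [sub_self]
  -- integrability of ψ̃ terms
  have hψint : ∀ w ∈ ({w0, w1, z} : Set ℕ), (w = 0 ∨ w ∈ Finset.Icc 1 J) →
      Integrable (psiSWO P X Z S J pt πt w) P := by
    intro w hw hw'
    rcases hw' with h0 | hIcc
    · subst h0
      rw [hψ0]; exact integrable_const 0
    · have hwne : w ≠ 0 := by obtain ⟨h1, _⟩ := Finset.mem_Icc.mp hIcc; omega
      rw [hψ_eq w hwne]
      refine integrable_of_bdd (2 / cw + 1) (Measurable.aestronglyMeasurable ?_) ?_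
      · exact (((hindicm w).mul (hSobsm.sub ((hptm w hw).comp hset.hX))).div
          ((hπtm w hw).comp hset.hX)).add ((hptm w hw).comp hset.hX)
      · intro ω
        have h2 : |Sobs J Z S ω - pt w (X ω)| ≤ 2 := by
          calc |Sobs J Z S ω - pt w (X ω)| ≤ |Sobs J Z S ω| + |pt w (X ω)| := abs_sub _ _
            _ ≤ 1 + 1 := add_le_add (hSobsb ω) (hptub1 w hw hwne (X ω))
            _ = 2 := by norm_num
        have h1 : |indic Z w ω * (Sobs J Z S ω - pt w (X ω))| ≤ 2 := by
          rw [abs_mul]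
          calc |indic Z w ω| * |Sobs J Z S ω - pt w (X ω)| ≤ 1 * 2 :=
              mul_le_mul (hindicb w ω) h2 (abs_nonneg _) zero_le_one
            _ = 2 := one_mul 2
        calc |indic Z w ω * (Sobs J Z S ω - pt w (X ω)) / πt w (X ω) + pt w (X ω)|
            ≤ |indic Z w ω * (Sobs J Z S ω - pt w (X ω)) / πt w (X ω)| + |pt w (X ω)| :=
            abs_add_le _ _
          _ ≤ 2 / cw + 1 := add_le_add (abs_div_le_of h1 hcw0 (hπlb w hw hwne (X ω)))
            (hptub1 w hw hwne (X ω))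
  have hmtmX : Measurable[mX X] fun ω => mt (X ω) := hmtm.comp hXmX
  have hmtamb : Measurable fun ω => mt (X ω) := hmtm.comp hset.hX
  have hmtb' : ∀ ω, |mt (X ω)| ≤ Cm := fun ω => hCm (X ω)
  have hGm : Measurable (Gsum J S) := Finset.measurable_sum _ fun w _ => hset.hSm w
  constructor
  · -- first identity
    have hWQlb : ∀ ω, cw * cw ≤ workP X pt z ω * πt z (X ω) := fun ω =>
      mul_le_mul (hworklbz ω) (hπlb z hmemz hzne (X ω)) (le_of_lt hcw0)
        (le_trans (le_of_lt hcw0) (hworklbz ω))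
    have hΔb : ∀ ω, |workP X pt w1 ω - workP X pt w0 ω| ≤ 2 := by
      intro ω
      calc |workP X pt w1 ω - workP X pt w0 ω|
          ≤ |workP X pt w1 ω| + |workP X pt w0 ω| := abs_sub _ _
        _ ≤ 1 + 1 := add_le_add (hworkb1 w1 hmem1 ω) (hworkb1 w0 hmem0 ω)
        _ = 2 := by norm_num
    have hfAb : ∀ ω, |(workP X pt w1 ω - workP X pt w0 ω)
        / (workP X pt z ω * πt z (X ω))| ≤ 2 / (cw * cw) :=
      fun ω => abs_div_le_of (hΔb ω) (by positivity) (hWQlb ω)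
    have hfBb : ∀ ω, |(-((workP X pt w1 ω - workP X pt w0 ω) * mt (X ω)
        / (workP X pt z ω * πt z (X ω))))| ≤ 2 * Cm / (cw * cw) := by
      intro ω
      rw [abs_neg]
      refine abs_div_le_of ?_ (by positivity) (hWQlb ω)
      rw [abs_mul]
      exact mul_le_mul (hΔb ω) (hmtb' ω) (abs_nonneg _) (by norm_num)
    have hfAmX : Measurable[mX X] fun ω => (workP X pt w1 ω - workP X pt w0 ω)
        / (workP X pt z ω * πt z (X ω)) :=
      ((hworkmX w1 hmem1).sub (hworkmX w0 hmem0)).div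
        ((hworkmX z hmemz).mul ((hπtm z hmemz).comp hXmX))
    have hfBmX : Measurable[mX X] fun ω => (-((workP X pt w1 ω - workP X pt w0 ω) * mt (X ω)
        / (workP X pt z ω * πt z (X ω)))) :=
      ((((hworkmX w1 hmem1).sub (hworkmX w0 hmem0)).mul hmtmX).div
        ((hworkmX z hmemz).mul ((hπtm z hmemz).comp hXmX))).neg
    have hfAamb : Measurable fun ω => (workP X pt w1 ω - workP X pt w0 ω)
        / (workP X pt z ω * πt z (X ω)) := hfAmX.mono hm le_rfl
    have hfBamb : Measurable fun ω => (-((workP X pt w1 ω - workP X pt w0 ω) * mt (X ω)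
        / (workP X pt z ω * πt z (X ω)))) := hfBmX.mono hm le_rfl
    -- integrability of the four pieces
    have intA : Integrable (fun ω => ((workP X pt w1 ω - workP X pt w0 ω)
        / (workP X pt z ω * πt z (X ω))) * (indic Z z ω * Sobs J Z S ω * Yobs J Z Y ω)) P :=
      hW3int.bdd_mul hfAamb.aestronglyMeasurable
        (c := 2 / (cw * cw)) (Filter.Eventually.of_forall fun ω => by rw [Real.norm_eq_abs]; exact hfAb ω)
    have intB : Integrable (fun ω => (-((workP X pt w1 ω - workP X pt w0 ω) * mt (X ω)
        / (workP X pt z ω * πt z (X ω)))) * (indic Z z ω * Sobs J Z S ω)) P :=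
      (hW1int z).bdd_mul hfBamb.aestronglyMeasurable
        (c := 2 * Cm / (cw * cw)) (Filter.Eventually.of_forall fun ω => by rw [Real.norm_eq_abs]; exact hfBb ω)
    have intD : Integrable (fun ω => mt (X ω) * psiSWO P X Z S J pt πt w1 ω) P :=
      (hψint w1 hmem1 hw1').bdd_mul hmtamb.aestronglyMeasurable
        (c := Cm) (Filter.Eventually.of_forall fun ω => by rw [Real.norm_eq_abs]; exact hmtb' ω)
    have intE : Integrable (fun ω => mt (X ω) * psiSWO P X Z S J pt πt w0 ω) P :=
      (hψint w0 hmem0 hw0').bdd_mul hmtamb.aestronglyMeasurable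
        (c := Cm) (Filter.Eventually.of_forall fun ω => by rw [Real.norm_eq_abs]; exact hmtb' ω)
    have intA' : Integrable (fun ω => ((workP X pt w1 ω - workP X pt w0 ω)
        / (workP X pt z ω * πt z (X ω)))
        * (mz ω * piX P X Z z ω * pscore P X S J z ω)) P :=
      (integrable_condExp.congr hV3).bdd_mul hfAamb.aestronglyMeasurable
        (c := 2 / (cw * cw)) (Filter.Eventually.of_forall fun ω => by rw [Real.norm_eq_abs]; exact hfAb ω)
    have intB' : Integrable (fun ω => (-((workP X pt w1 ω - workP X pt w0 ω) * mt (X ω)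
        / (workP X pt z ω * πt z (X ω)))) * (piX P X Z z ω * pscore P X S J z ω)) P :=
      (integrable_condExp.congr (hW1V z hz)).bdd_mul hfBamb.aestronglyMeasurable
        (c := 2 * Cm / (cw * cw)) (Filter.Eventually.of_forall fun ω => by rw [Real.norm_eq_abs]; exact hfBb ω)
    have intD' : Integrable (fun ω => mt (X ω) * Vψ w1 ω) P :=
      (hVψint w1 hmem1 hw1').bdd_mul hmtamb.aestronglyMeasurable
        (c := Cm) (Filter.Eventually.of_forall fun ω => by rw [Real.norm_eq_abs]; exact hmtb' ω)
    have intE' : Integrable (fun ω => mt (X ω) * Vψ w0 ω) P :=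
      (hVψint w0 hmem0 hw0').bdd_mul hmtamb.aestronglyMeasurable
        (c := Cm) (Filter.Eventually.of_forall fun ω => by rw [Real.norm_eq_abs]; exact hmtb' ω)
    -- pull the conditional expectations
    have pA : ∫ ω, ((workP X pt w1 ω - workP X pt w0 ω) / (workP X pt z ω * πt z (X ω)))
          * (indic Z z ω * Sobs J Z S ω * Yobs J Z Y ω) ∂P
        = ∫ ω, ((workP X pt w1 ω - workP X pt w0 ω) / (workP X pt z ω * πt z (X ω)))
          * (mz ω * piX P X Z z ω * pscore P X S J z ω) ∂P :=
      pull_eq hm hfAmX.stronglyMeasurable (2 / (cw * cw)) hfAb hW3int hV3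
    have pB : ∫ ω, (-((workP X pt w1 ω - workP X pt w0 ω) * mt (X ω)
          / (workP X pt z ω * πt z (X ω)))) * (indic Z z ω * Sobs J Z S ω) ∂P
        = ∫ ω, (-((workP X pt w1 ω - workP X pt w0 ω) * mt (X ω)
          / (workP X pt z ω * πt z (X ω)))) * (piX P X Z z ω * pscore P X S J z ω) ∂P :=
      pull_eq hm hfBmX.stronglyMeasurable (2 * Cm / (cw * cw)) hfBb (hW1int z) (hW1V z hz)
    have pD : ∫ ω, mt (X ω) * psiSWO P X Z S J pt πt w1 ω ∂P
        = ∫ ω, mt (X ω) * Vψ w1 ω ∂P :=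
      hpullψ w1 hmem1 hw1' (fun ω => mt (X ω)) Cm hmtmX hmtb'
    have pE : ∫ ω, mt (X ω) * psiSWO P X Z S J pt πt w0 ω ∂P
        = ∫ ω, mt (X ω) * Vψ w0 ω ∂P :=
      hpullψ w0 hmem0 hw0' (fun ω => mt (X ω)) Cm hmtmX hmtb'
    -- the closed form equals m_z(X)·e_g(X) a.e.
    have hKae : (fun ω => (((workP X pt w1 ω - workP X pt w0 ω)
          / (workP X pt z ω * πt z (X ω)))
          * (mz ω * piX P X Z z ω * pscore P X S J z ω)
        + (-((workP X pt w1 ω - workP X pt w0 ω) * mt (X ω)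
          / (workP X pt z ω * πt z (X ω)))) * (piX P X Z z ω * pscore P X S J z ω))
        + (mt (X ω) * Vψ w1 ω - mt (X ω) * Vψ w0 ω))
        =ᵐ[P] fun ω => mz ω * eg P X J S g ω := by
      rcases htwo with ⟨hπc, hpc⟩ | ⟨hπc, hmc⟩ | ⟨hpc, hmc⟩
      · filter_upwards [hπc z hmemz hzne, hpc z hmemz, hpc w1 hmem1, hpc w0 hmem0,
          hVψp w1 hmem1 hw1', hVψp w0 hmem0 hw0', hEg] with ω e1 e2 e3 e4 e5 e6 e7
        rw [e7, e5, e6, e3, e4, ← e1, ← e2]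
        have hW : workP X pt z ω ≠ 0 := by have := hworklbz ω; linarith
        have hQ : πt z (X ω) ≠ 0 := by have := hπlb z hmemz hzne (X ω); linarith
        field_simp
        ring
      · filter_upwards [hmc, hVψp w1 hmem1 hw1', hVψp w0 hmem0 hw0', hEg]
          with ω e1 e2 e3 e4
        rw [e4, e2, e3, e1]
        ring
      · filter_upwards [hmc, hVψp w1 hmem1 hw1', hVψp w0 hmem0 hw0', hEg]
          with ω e1 e2 e3 e4
        rw [e4, e2, e3, e1]
        ring
    have hRHS : ∫ ω, Y z ω * indG J S g ω ∂P = ∫ ω, mz ω * eg P X J S g ω ∂P := by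
      have h1 : ∫ ω, Y z ω * indG J S g ω ∂P
          = ∫ ω, (P[fun ω' => Y z ω' * indG J S g ω'|mX X]) ω ∂P :=
        (integral_condExp hm).symm
      rw [h1]
      exact integral_congr_ae hA
    calc ∫ ω, ((workP X pt w1 ω - workP X pt w0 ω) / workP X pt z ω
          * (indic Z z ω * Sobs J Z S ω * (Yobs J Z Y ω - mt (X ω)) / πt z (X ω))
          + mt (X ω) * (psiSWO P X Z S J pt πt w1 ω - psiSWO P X Z S J pt πt w0 ω)) ∂P
        = ∫ ω, ((((workP X pt w1 ω - workP X pt w0 ω) / (workP X pt z ω * πt z (X ω)))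
            * (indic Z z ω * Sobs J Z S ω * Yobs J Z Y ω)
          + (-((workP X pt w1 ω - workP X pt w0 ω) * mt (X ω)
            / (workP X pt z ω * πt z (X ω)))) * (indic Z z ω * Sobs J Z S ω))
          + (mt (X ω) * psiSWO P X Z S J pt πt w1 ω
            - mt (X ω) * psiSWO P X Z S J pt πt w0 ω)) ∂P := by
          refine integral_congr_ae (Filter.Eventually.of_forall fun ω => ?_)
          ring
      _ = (∫ ω, (((workP X pt w1 ω - workP X pt w0 ω) / (workP X pt z ω * πt z (X ω)))
            * (indic Z z ω * Sobs J Z S ω * Yobs J Z Y ω)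
          + (-((workP X pt w1 ω - workP X pt w0 ω) * mt (X ω)
            / (workP X pt z ω * πt z (X ω)))) * (indic Z z ω * Sobs J Z S ω)) ∂P)
          + ∫ ω, (mt (X ω) * psiSWO P X Z S J pt πt w1 ω
            - mt (X ω) * psiSWO P X Z S J pt πt w0 ω) ∂P :=
          integral_add (intA.add intB) (intD.sub intE)
      _ = ((∫ ω, ((workP X pt w1 ω - workP X pt w0 ω) / (workP X pt z ω * πt z (X ω)))
            * (indic Z z ω * Sobs J Z S ω * Yobs J Z Y ω) ∂P)
          + ∫ ω, (-((workP X pt w1 ω - workP X pt w0 ω) * mt (X ω)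
            / (workP X pt z ω * πt z (X ω)))) * (indic Z z ω * Sobs J Z S ω) ∂P)
          + ((∫ ω, mt (X ω) * psiSWO P X Z S J pt πt w1 ω ∂P)
            - ∫ ω, mt (X ω) * psiSWO P X Z S J pt πt w0 ω ∂P) := by
          rw [integral_add intA intB, integral_sub intD intE]
      _ = ((∫ ω, ((workP X pt w1 ω - workP X pt w0 ω) / (workP X pt z ω * πt z (X ω)))
            * (mz ω * piX P X Z z ω * pscore P X S J z ω) ∂P)
          + ∫ ω, (-((workP X pt w1 ω - workP X pt w0 ω) * mt (X ω)
            / (workP X pt z ω * πt z (X ω)))) * (piX P X Z z ω * pscore P X S J z ω) ∂P)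
          + ((∫ ω, mt (X ω) * Vψ w1 ω ∂P) - ∫ ω, mt (X ω) * Vψ w0 ω ∂P) := by
          rw [pA, pB, pD, pE]
      _ = (∫ ω, (((workP X pt w1 ω - workP X pt w0 ω) / (workP X pt z ω * πt z (X ω)))
            * (mz ω * piX P X Z z ω * pscore P X S J z ω)
          + (-((workP X pt w1 ω - workP X pt w0 ω) * mt (X ω)
            / (workP X pt z ω * πt z (X ω)))) * (piX P X Z z ω * pscore P X S J z ω)) ∂P)
          + ∫ ω, (mt (X ω) * Vψ w1 ω - mt (X ω) * Vψ w0 ω) ∂P := by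
          rw [integral_add intA' intB', integral_sub intD' intE']
      _ = ∫ ω, ((((workP X pt w1 ω - workP X pt w0 ω) / (workP X pt z ω * πt z (X ω)))
            * (mz ω * piX P X Z z ω * pscore P X S J z ω)
          + (-((workP X pt w1 ω - workP X pt w0 ω) * mt (X ω)
            / (workP X pt z ω * πt z (X ω)))) * (piX P X Z z ω * pscore P X S J z ω))
          + (mt (X ω) * Vψ w1 ω - mt (X ω) * Vψ w0 ω)) ∂P :=
          (integral_add (intA'.add intB') (intD'.sub intE')).symm
      _ = ∫ ω, mz ω * eg P X J S g ω ∂P := integral_congr_ae hKae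
      _ = ∫ ω, Y z ω * indG J S g ω ∂P := hRHS.symm
  · -- second identity
    have q1 : ∫ ω, psiSWO P X Z S J pt πt w1 ω ∂P = ∫ ω, Vψ w1 ω ∂P := by
      have h := hpullψ w1 hmem1 hw1' (fun _ => (1:ℝ)) 1 measurable_const (by norm_num)
      simpa using h
    have q0 : ∫ ω, psiSWO P X Z S J pt πt w0 ω ∂P = ∫ ω, Vψ w0 ω ∂P := by
      have h := hpullψ w0 hmem0 hw0' (fun _ => (1:ℝ)) 1 measurable_const (by norm_num)
      simpa using h
    calc ∫ ω, (psiSWO P X Z S J pt πt w1 ω - psiSWO P X Z S J pt πt w0 ω) ∂P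
        = (∫ ω, psiSWO P X Z S J pt πt w1 ω ∂P)
          - ∫ ω, psiSWO P X Z S J pt πt w0 ω ∂P :=
        integral_sub (hψint w1 hmem1 hw1') (hψint w0 hmem0 hw0')
      _ = (∫ ω, Vψ w1 ω ∂P) - ∫ ω, Vψ w0 ω ∂P := by rw [q1, q0]
      _ = ∫ ω, (Vψ w1 ω - Vψ w0 ω) ∂P :=
        (integral_sub (hVψint w1 hmem1 hw1') (hVψint w0 hmem0 hw0')).symm
      _ = ∫ ω, eg P X J S g ω ∂P := by
        refine integral_congr_ae ?_
        filter_upwards [hVψp w1 hmem1 hw1', hVψp w0 hmem0 hw0', hEg] with ω e1 e0 e2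
        rw [e1, e0, e2]
      _ = ∫ ω, indG J S g ω ∂P := integral_condExp hm
      _ = (P {ω | Gsum J S ω = (g : ℝ)}).toReal := by
        have hs : MeasurableSet {ω | Gsum J S ω = (g:ℝ)} := hGm (measurableSet_singleton _)
        rw [show indG J S g = Set.indicator {ω | Gsum J S ω = (g:ℝ)} (fun _ => (1:ℝ)) from rfl]
        rw [integral_indicator_const (1:ℝ) hs, smul_eq_mul, mul_one]; rfl






end TruncationByDeath
end
end

section
/- (Observational weighting identification.) Under treatment ignorability, monotonicity, principal ignorability and positivity, for every z ∈ {1,...,J} and every g ∈ {J−z+1,...,J}: E[Y_z·1(G=g)] = E[((p_{J−g+1}(X) − p_{J−g}(X))/p_z(X))·(1(Z=z)/π_z(X))·Y·S]. -/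
open MeasureTheory ProbabilityTheory

noncomputable section

namespace TruncationByDeath

variable {Ω : Type*} {𝒳 : Type*} [MeasurableSpace Ω] [MeasurableSpace 𝒳]

/-- Auxiliary counting lemma for monotone `{0,1}`-valued sequences. -/
lemma count_aux (J : ℕ) (a : ℕ → ℝ) (h01 : ∀ w, a w = 0 ∨ a w = 1)
    (hmono : ∀ w ∈ Finset.Icc 1 J, ∀ w' ∈ Finset.Icc 1 J, w' ≤ w → a w' ≤ a w) :
    ∃ k, k ≤ J ∧ (∑ w ∈ Finset.Icc 1 J, a w) = (k : ℝ) ∧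
      ∀ w ∈ Finset.Icc 1 J, (a w = 1 ↔ J - w + 1 ≤ k) := by
  classical
  set F := (Finset.Icc 1 J).filter (fun w => a w = 1) with hF
  refine ⟨F.card, ?_, ?_, ?_⟩
  · calc F.card ≤ (Finset.Icc 1 J).card := Finset.card_filter_le _ _
      _ = J := by simp
  · have h1 : (∑ w ∈ Finset.Icc 1 J, a w)
        = ∑ w ∈ Finset.Icc 1 J, (if a w = 1 then (1:ℝ) else 0) := by
      refine Finset.sum_congr rfl fun w _ => ?_
      rcases h01 w with h | h <;> simp [h]
    rw [h1, Finset.sum_boole]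
  · intro w hw
    obtain ⟨hw1, hwJ⟩ := Finset.mem_Icc.1 hw
    constructor
    · intro haw
      have hsub : Finset.Icc w J ⊆ F := by
        intro u hu
        obtain ⟨huw, huJ⟩ := Finset.mem_Icc.1 hu
        have humem : u ∈ Finset.Icc 1 J := Finset.mem_Icc.2 ⟨le_trans hw1 huw, huJ⟩
        have h1 : a w ≤ a u := hmono u humem w hw huw
        rw [haw] at h1
        refine Finset.mem_filter.2 ⟨humem, ?_⟩
        rcases h01 u with h | h
        · rw [h] at h1; linarith
        · exact h
      have := Finset.card_le_card hsub
      rw [Nat.card_Icc] at this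
      omega
    · intro hk
      by_contra haw
      have haw0 : a w = 0 := (h01 w).resolve_right haw
      have hsub : F ⊆ Finset.Icc (w+1) J := by
        intro u hu
        obtain ⟨humem, hau⟩ := Finset.mem_filter.1 hu
        obtain ⟨hu1, huJ⟩ := Finset.mem_Icc.1 humem
        refine Finset.mem_Icc.2 ⟨?_, huJ⟩
        by_contra hlt
        have : a u ≤ a w := hmono w hw u humem (by omega)
        rw [hau, haw0] at this; linarith
      have := Finset.card_le_card hsub
      rw [Nat.card_Icc] at this
      omega


/-- **observational weighting identification.** Under treatment
ignorability, monotonicity, principal ignorability and positivity, for every `z ∈ {1,…,J}`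
and `g ∈ {J−z+1,…,J}`:
`E[Y_z·1(G=g)] = E[((p_{J−g+1}(X) − p_{J−g}(X))/p_z(X)) · (1(Z=z)/π_z(X)) · Y·S]`. -/
theorem statement14 (P : Measure Ω) [IsProbabilityMeasure P] (J : ℕ)
    (X : Ω → 𝒳) (Z : Ω → ℕ) (S Y : ℕ → Ω → ℝ)
    (hset : SetupB P J X Z S Y)
    (hTI : TreatmentIgnorability P J X Z S Y)
    (hmono : Monotonicity P J S)
    (hPI : PrincipalIgnorability P J X S Y)
    (hpos : Positivity P J X S) :
    ∀ z ∈ Finset.Icc 1 J, ∀ g ∈ Finset.Icc (J - z + 1) J,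
      ∫ ω, Y z ω * indG J S g ω ∂P
        = ∫ ω, ((pscore P X S J (J - g + 1) ω - pscore P X S J (J - g) ω)
              / pscore P X S J z ω)
            * (indic Z z ω / piX P X Z z ω) * (Yobs J Z Y ω * Sobs J Z S ω) ∂P := by
  classical
  obtain ⟨c, hc, hcbd⟩ := hpos
  obtain ⟨⟨cπ, hcπ, hπbd⟩, hTIf⟩ := hTI
  obtain ⟨C0, hC0⟩ := hset.hYbd
  set C := max C0 0 with hC_def
  have hC : ∀ w ω, |Y w ω| ≤ C := fun w ω => le_trans (hC0 w ω) (le_max_left _ _)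
  have hCnn : (0:ℝ) ≤ C := le_max_right _ _
  have hm : mX X ≤ ‹MeasurableSpace Ω› := hset.hX.comap_le
  haveI : SigmaFinite (P.trim hm) := inferInstance
  intro z hz g hg
  obtain ⟨hz1, hzJ⟩ := Finset.mem_Icc.1 hz
  obtain ⟨hglo, hgJ⟩ := Finset.mem_Icc.1 hg
  have hg1 : 1 ≤ g := by omega
  have hJ2 : 2 ≤ J := hset.hJ
  -- measurability facts
  have hGm : Measurable (Gsum J S) := by
    unfold Gsum; exact Finset.measurable_sum _ fun i _ => hset.hSm i
  have hindGm : ∀ g', Measurable (indG J S g') := by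
    intro g'
    unfold indG
    exact measurable_const.indicator (hGm (measurableSet_singleton _))
  have hindicm : Measurable (indic Z z) := by
    unfold indic
    exact Measurable.ite (hset.hZ (measurableSet_singleton z)) measurable_const measurable_const
  -- integrability helper
  have hintbd : ∀ (f : Ω → ℝ) (B : ℝ), Measurable f → (∀ ω, |f ω| ≤ B) → Integrable f P := by
    intro f B hfm hfb
    exact (integrable_const B).mono' hfm.aestronglyMeasurable
      (Filter.Eventually.of_forall fun ω => by simpa [Real.norm_eq_abs] using hfb ω)
  have hS1 : ∀ w ω, |S w ω| ≤ 1 := by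
    intro w ω; rcases hset.hS01 w ω with h | h <;> simp [h]
  have hindG1 : ∀ g' ω, |indG J S g' ω| ≤ 1 := by
    intro g' ω
    unfold indG
    rw [Set.indicator_apply]
    split_ifs <;> norm_num
  have hintS : ∀ w, Integrable (S w) P := fun w => hintbd _ 1 (hset.hSm w) (hS1 w)
  have hintYindG : ∀ g', Integrable (fun ω => Y z ω * indG J S g' ω) P := by
    intro g'
    refine hintbd _ C ((hset.hYm z).mul (hindGm g')) fun ω => ?_
    rw [abs_mul]
    calc |Y z ω| * |indG J S g' ω| ≤ C * 1 :=
          mul_le_mul (hC z ω) (hindG1 g' ω) (abs_nonneg _) hCnn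
      _ = C := mul_one C
  have hintYS : Integrable (fun ω => Y z ω * S z ω) P := by
    refine hintbd _ C ((hset.hYm z).mul (hset.hSm z)) fun ω => ?_
    rw [abs_mul]
    calc |Y z ω| * |S z ω| ≤ C * 1 := mul_le_mul (hC z ω) (hS1 z ω) (abs_nonneg _) hCnn
      _ = C := mul_one C
  have hintIYS : Integrable (fun ω => indic Z z ω * (Y z ω * S z ω)) P := by
    refine hintbd _ C (hindicm.mul ((hset.hYm z).mul (hset.hSm z))) fun ω => ?_
    rw [abs_mul, abs_mul]
    have h1 : |indic Z z ω| ≤ 1 := by unfold indic; split_ifs <;> norm_num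
    calc |indic Z z ω| * (|Y z ω| * |S z ω|)
        ≤ 1 * (C * 1) := by
          refine mul_le_mul h1 ?_ (by positivity) one_pos.le
          exact mul_le_mul (hC z ω) (hS1 z ω) (abs_nonneg _) hCnn
      _ = C := by ring
  -- a.e. combinatorial structure of the strata
  have hmono' : ∀ᵐ ω ∂P, ∀ w, ∀ w', w ∈ Finset.Icc 1 J → w' ∈ Finset.Icc 1 J → w' ≤ w →
      S w' ω ≤ S w ω := by
    rw [ae_all_iff]
    intro w
    rw [ae_all_iff]
    intro w'
    by_cases h : w ∈ Finset.Icc 1 J ∧ w' ∈ Finset.Icc 1 J ∧ w' ≤ w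
    · filter_upwards [hmono w h.1 w' h.2.1 h.2.2] with ω h1 _ _ _
      exact h1
    · filter_upwards with ω h1 h2 h3
      exact absurd ⟨h1, h2, h3⟩ h
  have hkey : ∀ᵐ ω ∂P, ∃ k, k ≤ J ∧ Gsum J S ω = (k:ℝ) ∧
      ∀ w ∈ Finset.Icc 1 J, (S w ω = 1 ↔ J - w + 1 ≤ k) := by
    filter_upwards [hmono'] with ω hmω
    exact count_aux J (fun w => S w ω) (fun w => hset.hS01 w ω)
      (fun w hw w' hw' hle => hmω w w' hw hw' hle)
  have hSz : ∀ᵐ ω ∂P, S z ω = ∑ g' ∈ Finset.Icc (J - z + 1) J, indG J S g' ω := by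
    filter_upwards [hkey] with ω hω
    obtain ⟨k, hkJ, hGk, hiff⟩ := hω
    have hind : ∀ g' : ℕ, indG J S g' ω = if k = g' then (1:ℝ) else 0 := by
      intro g'
      unfold indG
      simp only [Set.indicator_apply, Set.mem_setOf_eq, hGk, Nat.cast_inj]
    have hsum : ∑ g' ∈ Finset.Icc (J - z + 1) J, indG J S g' ω
        = if k ∈ Finset.Icc (J - z + 1) J then (1:ℝ) else 0 := by
      rw [Finset.sum_congr rfl fun g' _ => hind g']
      exact Finset.sum_ite_eq _ _ _
    rw [hsum]
    rcases hset.hS01 z ω with h0 | h1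
    · have hnot : k ∉ Finset.Icc (J - z + 1) J := by
        intro hmem
        have h2 := (hiff z hz).2 (Finset.mem_Icc.1 hmem).1
        rw [h0] at h2; norm_num at h2
      rw [if_neg hnot]; exact h0
    · have hmem : k ∈ Finset.Icc (J - z + 1) J :=
        Finset.mem_Icc.2 ⟨(hiff z hz).1 h1, hkJ⟩
      rw [if_pos hmem]; exact h1
  have hGdiffpt : ∀ᵐ ω ∂P, indG J S g ω
      = S (J - g + 1) ω - (if g = J then 0 else S (J - g) ω) := by
    filter_upwards [hkey] with ω hω
    obtain ⟨k, hkJ, hGk, hiff⟩ := hω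
    have hind : indG J S g ω = if k = g then (1:ℝ) else 0 := by
      unfold indG
      simp only [Set.indicator_apply, Set.mem_setOf_eq, hGk, Nat.cast_inj]
    have hSval : ∀ w, w ∈ Finset.Icc 1 J → S w ω = if J - w + 1 ≤ k then (1:ℝ) else 0 := by
      intro w hw
      by_cases hle : J - w + 1 ≤ k
      · rw [if_pos hle]; exact (hiff w hw).2 hle
      · rw [if_neg hle]
        rcases hset.hS01 w ω with h | h
        · exact h
        · exact absurd ((hiff w hw).1 h) hle
    by_cases hgJ' : g = J
    · rw [hind, hgJ']
      rw [hSval (J - J + 1) (by rw [Finset.mem_Icc]; omega)]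
      rw [if_pos rfl, sub_zero]
      split_ifs <;> first | (exfalso; omega) | norm_num
    · rw [hind, if_neg hgJ', hSval (J - g + 1) (by rw [Finset.mem_Icc]; omega),
        hSval (J - g) (by rw [Finset.mem_Icc]; omega)]
      split_ifs <;> first | (exfalso; omega) | norm_num
  -- conditional-expectation identities
  have hpz : pscore P X S J z = P[S z | mX X] := by
    unfold pscore; rw [if_neg (by omega), if_neg (by omega)]
  have hSzsum : S z =ᵐ[P] ∑ g' ∈ Finset.Icc (J - z + 1) J, indG J S g' := by
    filter_upwards [hSz] with ω hω
    rw [Finset.sum_apply]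
    exact hω
  have hpsum : ∀ᵐ ω ∂P, pscore P X S J z ω
      = ∑ g' ∈ Finset.Icc (J - z + 1) J, eg P X J S g' ω := by
    have h1 : P[S z | mX X] =ᵐ[P] P[∑ g' ∈ Finset.Icc (J - z + 1) J, indG J S g' | mX X] :=
      condExp_congr_ae hSzsum
    have h2 := condExp_finsetSum (μ := P) (m := mX X)
      (fun (i : ℕ) (_ : i ∈ Finset.Icc (J - z + 1) J) => hintbd (indG J S i) 1 (hindGm i) (hindG1 i))
    rw [hpz]
    filter_upwards [h1, h2] with ω h1ω h2ω
    rw [h1ω, h2ω, Finset.sum_apply]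
    rfl
  have hΔ : ∀ᵐ ω ∂P, pscore P X S J (J - g + 1) ω - pscore P X S J (J - g) ω
      = eg P X J S g ω := by
    by_cases hgJ' : g = J
    · have e1 : J - J + 1 = 1 := by omega
      have e2 : J - J = 0 := by omega
      have hind1 : indG J S g =ᵐ[P] S 1 := by
        filter_upwards [hGdiffpt] with ω hω
        rw [hω, if_pos hgJ', sub_zero, hgJ', e1]
      have h2 : eg P X J S g =ᵐ[P] P[S 1 | mX X] := condExp_congr_ae hind1
      have hps0 : pscore P X S J (J - g) = fun _ => (0:ℝ) := by
        rw [hgJ', e2]; unfold pscore; rw [if_pos rfl]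
      have hps1 : pscore P X S J (J - g + 1) = P[S 1 | mX X] := by
        rw [hgJ', e1]; unfold pscore; rw [if_neg one_ne_zero, if_neg (by omega)]
      rw [hps0, hps1]
      filter_upwards [h2] with ω hω
      simp [hω]
    · have hind1 : indG J S g =ᵐ[P] fun ω => S (J - g + 1) ω - S (J - g) ω := by
        filter_upwards [hGdiffpt] with ω hω
        rw [hω, if_neg hgJ']
      have h2 : eg P X J S g =ᵐ[P] P[fun ω => S (J - g + 1) ω - S (J - g) ω | mX X] :=
        condExp_congr_ae hind1
      have h3 := condExp_sub (μ := P) (m := mX X) (hintS (J - g + 1)) (hintS (J - g))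
      have hps1 : pscore P X S J (J - g + 1) = P[S (J - g + 1) | mX X] := by
        unfold pscore; rw [if_neg (by omega), if_neg (by omega)]
      have hps2 : pscore P X S J (J - g) = P[S (J - g) | mX X] := by
        unfold pscore; rw [if_neg (by omega), if_neg (by omega)]
      rw [hps1, hps2]
      filter_upwards [h2, h3] with ω h2ω h3ω
      rw [h2ω]
      have h4 : P[fun ω => S (J - g + 1) ω - S (J - g) ω | mX X]
          = P[S (J - g + 1) - S (J - g) | mX X] := rfl
      rw [h4, h3ω]
      simp [Pi.sub_apply]
  -- treatment ignorability applied to the truncated functional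
  have hπz : ∀ᵐ ω ∂P, cπ ≤ piX P X Z z ω := hπbd z hz
  have hcz : ∀ᵐ ω ∂P, c ≤ pscore P X S J z ω := hcbd z hz
  set φ : (ℕ → ℝ) → (ℕ → ℝ) → ℝ :=
    fun s y => (max (-C) (min C (y z))) * (max 0 (min 1 (s z))) with hφ_def
  have hφm : Measurable (Function.uncurry φ) := by
    simp only [hφ_def]
    exact (measurable_const.max (measurable_const.min
        ((measurable_pi_apply z).comp measurable_snd))).mul
      (measurable_const.max (measurable_const.min
        ((measurable_pi_apply z).comp measurable_fst)))
  have hφbd : ∀ s y, |φ s y| ≤ C := by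
    intro s y
    simp only [hφ_def]
    rw [abs_mul]
    have h1 : |max (-C) (min C (y z))| ≤ C :=
      abs_le.2 ⟨le_max_left _ _, max_le (by linarith) (min_le_left _ _)⟩
    have h2 : |max 0 (min 1 (s z))| ≤ 1 := by
      rw [abs_le]
      exact ⟨by linarith [le_max_left (0:ℝ) (min 1 (s z))],
        max_le (by norm_num) (min_le_left _ _)⟩
    calc |max (-C) (min C (y z))| * |max 0 (min 1 (s z))|
        ≤ C * 1 := mul_le_mul h1 h2 (abs_nonneg _) hCnn
      _ = C := mul_one C
  have hφval : ∀ ω, φ (fun w => S w ω) (fun w => Y w ω) = Y z ω * S z ω := by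
    intro ω
    simp only [hφ_def]
    have h1 : max (-C) (min C (Y z ω)) = Y z ω := by
      rcases abs_le.1 (hC z ω) with ⟨ha, hb⟩
      rw [min_eq_right hb, max_eq_right ha]
    have h2 : max 0 (min 1 (S z ω)) = S z ω := by
      rcases hset.hS01 z ω with h | h <;> simp [h]
    rw [h1, h2]
  have hTIeq := hTIf z hz φ hφm ⟨C, hφbd⟩
  have hfun1 : (fun ω => indic Z z ω * φ (fun w => S w ω) (fun w => Y w ω))
      = fun ω => indic Z z ω * (Y z ω * S z ω) := by
    funext ω; rw [hφval ω]
  have hfun2 : (fun ω' => φ (fun w => S w ω') (fun w => Y w ω'))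
      = fun ω' => Y z ω' * S z ω' := by
    funext ω'; rw [hφval ω']
  rw [hfun1, hfun2] at hTIeq
  -- a.e. bounds on the scores
  have hps_bd : ∀ n : ℕ, ∀ᵐ ω ∂P, 0 ≤ pscore P X S J n ω ∧ pscore P X S J n ω ≤ 1 := by
    intro n
    unfold pscore
    split_ifs
    · filter_upwards with ω; norm_num
    · filter_upwards with ω; norm_num
    · have h0 : (0 : Ω → ℝ) ≤ᵐ[P] P[S n | mX X] :=
        condExp_nonneg (Filter.Eventually.of_forall fun ω => by
          rcases hset.hS01 n ω with h | h <;> simp [h])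
      have h1 : P[S n | mX X] ≤ᵐ[P] P[(fun _ => (1:ℝ)) | mX X] :=
        condExp_mono (hintS n) (integrable_const 1)
          (Filter.Eventually.of_forall fun ω => by
            rcases hset.hS01 n ω with h | h <;> simp [h])
      rw [condExp_const hm] at h1
      filter_upwards [h0, h1] with ω h0ω h1ω
      exact ⟨h0ω, h1ω⟩
  have hps_sm : ∀ n : ℕ, StronglyMeasurable[mX X] (pscore P X S J n) := by
    intro n
    unfold pscore
    split_ifs
    · exact stronglyMeasurable_const
    · exact stronglyMeasurable_const
    · exact stronglyMeasurable_condExp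
  have hpiX_sm : StronglyMeasurable[mX X] (piX P X Z z) := stronglyMeasurable_condExp
  set A : Ω → ℝ := fun ω =>
    (pscore P X S J (J - g + 1) ω - pscore P X S J (J - g) ω) / pscore P X S J z ω
      / piX P X Z z ω with hA_def
  have hA_sm : StronglyMeasurable[mX X] A := by
    rw [hA_def]
    apply Measurable.stronglyMeasurable
    exact (((hps_sm (J - g + 1)).measurable.sub (hps_sm (J - g)).measurable).div
      (hps_sm z).measurable).div hpiX_sm.measurable
  have hA_bd : ∀ᵐ ω ∂P, ‖A ω‖ ≤ 1 / c / cπ := by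
    filter_upwards [hcz, hπz, hps_bd (J - g + 1), hps_bd (J - g)] with ω h1 h2 h3 h4
    simp only [hA_def]
    have hp_pos : 0 < pscore P X S J z ω := lt_of_lt_of_le hc h1
    have hπ_pos : 0 < piX P X Z z ω := lt_of_lt_of_le hcπ h2
    rw [Real.norm_eq_abs, abs_div, abs_div, abs_of_pos hp_pos, abs_of_pos hπ_pos]
    have hΔ1 : |pscore P X S J (J - g + 1) ω - pscore P X S J (J - g) ω| ≤ 1 :=
      abs_le.2 ⟨by linarith [h3.1, h3.2, h4.1, h4.2], by linarith [h3.1, h3.2, h4.1, h4.2]⟩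
    have step1 : |pscore P X S J (J - g + 1) ω - pscore P X S J (J - g) ω|
        / pscore P X S J z ω ≤ 1 / c := div_le_div₀ zero_le_one hΔ1 hc h1
    exact div_le_div₀ (by positivity) step1 hcπ h2
  have hintIYSA : Integrable (fun ω => A ω * (indic Z z ω * (Y z ω * S z ω))) P :=
    hintIYS.bdd_mul ((hA_sm.mono hm).aestronglyMeasurable) hA_bd
  -- combined principal ignorability
  have hPIall : ∀ᵐ ω ∂P, ∀ g', g' ∈ Finset.Icc (J - z + 1) J →
      (P[fun ω' => Y z ω' * indG J S g ω' | mX X]) ω * eg P X J S g' ω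
        = (P[fun ω' => Y z ω' * indG J S g' ω' | mX X]) ω * eg P X J S g ω := by
    rw [ae_all_iff]
    intro g'
    by_cases hg' : g' ∈ Finset.Icc (J - z + 1) J
    · filter_upwards [hPI z hz g hg g' hg'] with ω hω _
      exact hω
    · filter_upwards with ω h
      exact absurd h hg'
  have hYSsum : (fun ω => Y z ω * S z ω)
      =ᵐ[P] ∑ g' ∈ Finset.Icc (J - z + 1) J, (fun ω => Y z ω * indG J S g' ω) := by
    filter_upwards [hSz] with ω hω
    rw [Finset.sum_apply, hω, Finset.mul_sum]
  have hQsum : ∀ᵐ ω ∂P, (P[fun ω' => Y z ω' * S z ω' | mX X]) ω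
      = ∑ g' ∈ Finset.Icc (J - z + 1) J, (P[fun ω' => Y z ω' * indG J S g' ω' | mX X]) ω := by
    have h1 := condExp_congr_ae (m := mX X) hYSsum
    have h2 := condExp_finsetSum (μ := P) (m := mX X)
      (fun (i : ℕ) (_ : i ∈ Finset.Icc (J - z + 1) J) => hintYindG i)
    filter_upwards [h1, h2] with ω h1ω h2ω
    rw [h1ω, h2ω, Finset.sum_apply]
  -- algebra helper
  have halg : ∀ (e p π q cg : ℝ), π ≠ 0 → p ≠ 0 → e * q = cg * p →
      e / p / π * (π * q) = cg := by
    intro e p π q cg hπ hp h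
    field_simp
    linear_combination h
  -- the main chain of equalities
  have main : ∫ ω, ((pscore P X S J (J - g + 1) ω - pscore P X S J (J - g) ω)
          / pscore P X S J z ω)
        * (indic Z z ω / piX P X Z z ω) * (Yobs J Z Y ω * Sobs J Z S ω) ∂P
      = ∫ ω, Y z ω * indG J S g ω ∂P := by
    calc ∫ ω, ((pscore P X S J (J - g + 1) ω - pscore P X S J (J - g) ω)
            / pscore P X S J z ω)
          * (indic Z z ω / piX P X Z z ω) * (Yobs J Z Y ω * Sobs J Z S ω) ∂P
        = ∫ ω, A ω * (indic Z z ω * (Y z ω * S z ω)) ∂P := by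
          refine integral_congr_ae (Filter.Eventually.of_forall fun ω => ?_)
          beta_reduce
          by_cases hZω : Z ω = z
          · have hYo : Yobs J Z Y ω = Y z ω := by
              unfold Yobs
              rw [Finset.sum_eq_single_of_mem (Z ω) (hset.hZr ω)
                (fun b _ hb => by unfold indic; rw [if_neg fun h => hb h.symm]; exact zero_mul _)]
              unfold indic
              rw [if_pos rfl, one_mul, hZω]
            have hSo : Sobs J Z S ω = S z ω := by
              unfold Sobs
              rw [Finset.sum_eq_single_of_mem (Z ω) (hset.hZr ω)
                (fun b _ hb => by unfold indic; rw [if_neg fun h => hb h.symm]; exact zero_mul _)]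
              unfold indic
              rw [if_pos rfl, one_mul, hZω]
            rw [hYo, hSo]
            simp only [hA_def]
            unfold indic
            rw [if_pos hZω]
            ring
          · simp only [hA_def]
            unfold indic
            rw [if_neg hZω]
            ring
      _ = ∫ ω, (P[fun ω' => A ω' * (indic Z z ω' * (Y z ω' * S z ω')) | mX X]) ω ∂P :=
          (integral_condExp hm).symm
      _ = ∫ ω, A ω * (P[fun ω' => indic Z z ω' * (Y z ω' * S z ω') | mX X]) ω ∂P := by
          refine integral_congr_ae ?_
          have hmul := condExp_mul_of_stronglyMeasurable_left (μ := P) hA_sm hintIYSA hintIYS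
          filter_upwards [hmul] with ω hω
          exact hω
      _ = ∫ ω, A ω * (piX P X Z z ω * (P[fun ω' => Y z ω' * S z ω' | mX X]) ω) ∂P := by
          refine integral_congr_ae ?_
          filter_upwards [hTIeq] with ω hω
          rw [hω]
      _ = ∫ ω, (P[fun ω' => Y z ω' * indG J S g ω' | mX X]) ω ∂P := by
          refine integral_congr_ae ?_
          filter_upwards [hπz, hcz, hΔ, hQsum, hpsum, hPIall] with ω hπ hcω hΔω hQω hpω hPIω
          have hπ0 : piX P X Z z ω ≠ 0 := ne_of_gt (lt_of_lt_of_le hcπ hπ)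
          have hp0 : pscore P X S J z ω ≠ 0 := ne_of_gt (lt_of_lt_of_le hc hcω)
          have hsum_eq : eg P X J S g ω * (∑ g' ∈ Finset.Icc (J - z + 1) J,
              (P[fun ω' => Y z ω' * indG J S g' ω' | mX X]) ω)
              = (P[fun ω' => Y z ω' * indG J S g ω' | mX X]) ω * pscore P X S J z ω := by
            rw [Finset.mul_sum, hpω, Finset.mul_sum]
            refine Finset.sum_congr rfl fun g' hg' => ?_
            rw [mul_comm]
            exact (hPIω g' hg').symm
          simp only [hA_def]
          rw [hΔω, hQω]
          exact halg _ _ _ _ _ hπ0 hp0 hsum_eq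
      _ = ∫ ω, Y z ω * indG J S g ω ∂P := integral_condExp hm
  exact main.symm

end TruncationByDeath
end
end

section
/- (Observational outcome-regression identification.) Under treatment ignorability, monotonicity, principal ignorability and positivity, for every z ∈ {1,...,J} and every g ∈ {J−z+1,...,J}: E[Y_z·1(G=g)] = E[(1(Z=J−g+1)·S/π_{J−g+1}(X) − 1(Z=J−g)·S/π_{J−g}(X))·m_z(X)], where for g = J the term 1(Z=0)·S/π_0(X) is taken to be 0. -/
open MeasureTheory ProbabilityTheory

noncomputable section

namespace TruncationByDeath

variable {Ω : Type*} {𝒳 : Type*} [MeasurableSpace Ω] [MeasurableSpace 𝒳]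

/- ===== auxiliary lemmas ===== -/

lemma chain_facts (J : ℕ) (s : ℕ → ℝ) (h01 : ∀ w, s w = 0 ∨ s w = 1)
    (hmono : ∀ w ∈ Finset.Icc 1 J, ∀ w' ∈ Finset.Icc 1 J, w' ≤ w → s w' ≤ s w) :
    ∃ n : ℕ, n ≤ J ∧ (∑ w ∈ Finset.Icc 1 J, s w) = (n : ℝ) ∧
      ∀ w ∈ Finset.Icc 1 J, (s w = 1 ↔ J < n + w) := by
  classical
  set T := (Finset.Icc 1 J).filter (fun w => s w = 1) with hT
  refine ⟨T.card, ?_, ?_, ?_⟩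
  · calc T.card ≤ (Finset.Icc 1 J).card := Finset.card_filter_le _ _
    _ = J := by rw [Nat.card_Icc]; omega
  · have : ∀ w ∈ Finset.Icc 1 J, s w = (if s w = 1 then (1:ℝ) else 0) := by
      intro w _; rcases h01 w with h | h <;> simp [h]
    rw [Finset.sum_congr rfl this, Finset.sum_boole, hT]
  · intro w hw
    simp only [Finset.mem_Icc] at hw
    constructor
    · intro hsw
      have hsub : Finset.Icc w J ⊆ T := by
        intro w' hw'
        simp only [Finset.mem_Icc] at hw'
        have h1 : w' ∈ Finset.Icc 1 J := Finset.mem_Icc.2 ⟨le_trans hw.1 hw'.1, hw'.2⟩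
        have := hmono w' h1 w (Finset.mem_Icc.2 hw) hw'.1
        rcases h01 w' with h | h
        · rw [hsw] at this; rw [h] at this; norm_num at this
        · exact Finset.mem_filter.2 ⟨h1, h⟩
      have := Finset.card_le_card hsub
      rw [Nat.card_Icc] at this
      omega
    · intro hlt
      rcases h01 w with h | h
      swap; · exact h
      exfalso
      have hsub : T ⊆ Finset.Icc (w + 1) J := by
        intro w' hw'
        rcases Finset.mem_filter.1 hw' with ⟨h1, h2⟩
        simp only [Finset.mem_Icc] at h1 ⊢
        refine ⟨?_, h1.2⟩
        by_contra hc
        have hle : w' ≤ w := by omega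
        have := hmono w (Finset.mem_Icc.2 hw) w' (Finset.mem_Icc.2 h1) hle
        rw [h2, h] at this; norm_num at this
      have := Finset.card_le_card hsub
      rw [Nat.card_Icc] at this
      omega

lemma indic_measurable {Z : Ω → ℕ} (hZ : Measurable Z) (w : ℕ) :
    Measurable (indic Z w) :=
  Measurable.ite (hZ (measurableSet_singleton w)) measurable_const measurable_const

lemma indic_abs_le {Z : Ω → ℕ} (w : ℕ) (ω : Ω) : |indic Z w ω| ≤ 1 := by
  unfold indic; split <;> norm_num

lemma sum_indic_mul {J : ℕ} {Z : Ω → ℕ} (F : ℕ → Ω → ℝ) (ω : Ω)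
    (h : Z ω ∈ Finset.Icc 1 J) :
    ∑ w ∈ Finset.Icc 1 J, indic Z w ω * F w ω = F (Z ω) ω := by
  classical
  rw [Finset.sum_eq_single (Z ω)]
  · simp [indic]
  · intro w _ hne; simp [indic, Ne.symm hne]
  · intro hc; exact absurd h hc

lemma indG_eq {J : ℕ} {S : ℕ → Ω → ℝ} (g : ℕ) (ω : Ω) :
    indG J S g ω = if Gsum J S ω = (g : ℝ) then 1 else 0 := by
  simp [indG, Set.indicator_apply]

lemma indG_measurable {J : ℕ} {S : ℕ → Ω → ℝ} (hS : ∀ w, Measurable (S w)) (g : ℕ) :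
    Measurable (indG J S g) := by
  have hG : Measurable (Gsum J S) := Finset.measurable_sum _ (fun w _ => hS w)
  exact (measurable_const.indicator (hG (measurableSet_singleton _)))


lemma integrable_of_bound {P : Measure Ω} [IsProbabilityMeasure P] {f : Ω → ℝ}
    (hf : AEStronglyMeasurable f P) (C : ℝ) (h : ∀ᵐ ω ∂P, |f ω| ≤ C) :
    Integrable f P :=
  (integrable_const C).mono' hf (by simpa [Real.norm_eq_abs] using h)

lemma term_eq (P : Measure Ω) [IsProbabilityMeasure P] (J : ℕ)
    (X : Ω → 𝒳) (Z : Ω → ℕ) (S Y : ℕ → Ω → ℝ)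
    (hset : SetupB P J X Z S Y)
    (hTI : TreatmentIgnorability P J X Z S Y)
    (w : ℕ) (hw : w ∈ Finset.Icc 1 J)
    (cπ : ℝ) (hcπ : 0 < cπ) (hπ : ∀ᵐ ω ∂P, cπ ≤ piX P X Z w ω)
    (mz : Ω → ℝ) (hmzm : Measurable[mX X] mz)
    (Cm : ℝ) (hmzbd : ∀ᵐ ω ∂P, |mz ω| ≤ Cm) :
    ∫ ω, (indic Z w ω * Sobs J Z S ω / piX P X Z w ω) * mz ω ∂P
      = ∫ ω, mz ω * pscore P X S J w ω ∂P := by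
  classical
  have hm : mX X ≤ ‹MeasurableSpace Ω› := hset.hX.comap_le
  haveI : SigmaFinite (P.trim hm) := inferInstance
  simp only [Finset.mem_Icc] at hw
  -- replace Sobs by S w next to the treatment indicator
  have hSobs : ∀ ω, indic Z w ω * Sobs J Z S ω = indic Z w ω * S w ω := by
    intro ω
    unfold indic
    by_cases hZω : Z ω = w
    · have : Sobs J Z S ω = S (Z ω) ω := sum_indic_mul S ω (hset.hZr ω)
      rw [this, hZω]
    · rw [if_neg hZω]; ring
  -- the clamped functional fed to treatment ignorability
  set φ : (ℕ → ℝ) → (ℕ → ℝ) → ℝ := fun s _ => max 0 (min (s w) 1) with hφdef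
  have hφm : Measurable (Function.uncurry φ) := by
    apply Measurable.max measurable_const
    exact ((measurable_pi_apply w).comp measurable_fst).min measurable_const
  have hφbd : ∃ C, ∀ s y, |φ s y| ≤ C := by
    refine ⟨1, fun s y => ?_⟩
    rw [abs_le]
    exact ⟨le_trans (by norm_num : (-1:ℝ) ≤ 0) (le_max_left _ _),
      max_le (by norm_num) (min_le_right _ _)⟩
  have hφval : (fun ω' => φ (fun v => S v ω') (fun v => Y v ω')) = S w := by
    funext ω'
    rcases hset.hS01 w ω' with h | h <;> simp [hφdef, h]
  have hfac := hTI.2 w (Finset.mem_Icc.2 hw) φ hφm hφbd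
  rw [hφval] at hfac
  have hφval2 : (fun ω => indic Z w ω * φ (fun v => S v ω) (fun v => Y v ω))
      = fun ω => indic Z w ω * S w ω := by
    funext ω; rcases hset.hS01 w ω with h | h <;> simp [hφdef, h]
  rw [hφval2] at hfac
  -- pscore w is the conditional expectation of S w
  have hps : pscore P X S J w = P[S w | mX X] := by
    unfold pscore
    rw [if_neg (by omega), if_neg (by omega)]
  -- names
  set f : Ω → ℝ := fun ω => indic Z w ω * S w ω with hfdef
  set h : Ω → ℝ := fun ω => mz ω / piX P X Z w ω with hhdef
  have hπsm : StronglyMeasurable[mX X] (piX P X Z w) := stronglyMeasurable_condExp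
  have hhm : Measurable[mX X] h := hmzm.div hπsm.measurable
  have hhsm : StronglyMeasurable[mX X] h := hhm.stronglyMeasurable
  have hfm : Measurable f := (indic_measurable hset.hZ w).mul (hset.hSm w)
  have hfbd : ∀ ω, |f ω| ≤ 1 := by
    intro ω
    rw [hfdef, abs_mul]
    calc |indic Z w ω| * |S w ω| ≤ 1 * 1 := by
          apply mul_le_mul (indic_abs_le w ω) ?_ (abs_nonneg _) zero_le_one
          rcases hset.hS01 w ω with h | h <;> simp [h]
    _ = 1 := by ring
  have hfint : Integrable f P :=
    integrable_of_bound hfm.aestronglyMeasurable 1 (Filter.Eventually.of_forall hfbd)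
  have hhbd : ∀ᵐ ω ∂P, |h ω| ≤ Cm / cπ := by
    filter_upwards [hπ, hmzbd] with ω h1 h2
    rw [hhdef]
    simp only [abs_div]
    rw [abs_of_pos (lt_of_lt_of_le hcπ h1)]
    exact div_le_div₀ (le_trans (abs_nonneg _) h2) h2 hcπ h1
  have hhfint : Integrable (h * f) P := by
    apply integrable_of_bound
    · exact ((hhsm.mono hm).mul hfm.stronglyMeasurable).aestronglyMeasurable
    · show ∀ᵐ ω ∂P, |h ω * f ω| ≤ Cm / cπ * 1
      filter_upwards [hhbd] with ω h1
      rw [abs_mul]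
      have hCm : 0 ≤ Cm / cπ := le_trans (abs_nonneg _) h1
      exact mul_le_mul h1 (hfbd ω) (abs_nonneg _) hCm
  -- the integrand coincides with h * f
  have hintegrand : ∀ ω, (indic Z w ω * Sobs J Z S ω / piX P X Z w ω) * mz ω
      = h ω * f ω := by
    intro ω
    rw [hhdef, hfdef]
    simp only
    rw [← hSobs ω]
    ring
  calc ∫ ω, (indic Z w ω * Sobs J Z S ω / piX P X Z w ω) * mz ω ∂P
      = ∫ ω, (h * f) ω ∂P := by
        apply integral_congr_ae (Filter.Eventually.of_forall ?_)
        intro ω; exact hintegrand ω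
    _ = ∫ ω, (P[h * f | mX X]) ω ∂P := (integral_condExp hm).symm
    _ = ∫ ω, mz ω * pscore P X S J w ω ∂P := by
        apply integral_congr_ae
        have h1 : P[h * f | mX X] =ᵐ[P] h * P[f | mX X] :=
          condExp_mul_of_stronglyMeasurable_left hhsm hhfint hfint
        have h2 : P[f | mX X] =ᵐ[P]
            fun ω => piX P X Z w ω * (P[S w | mX X]) ω := hfac
        filter_upwards [h1, h2, hπ] with ω e1 e2 e3
        rw [e1]
        simp only [Pi.mul_apply]
        rw [e2, hps, hhdef]
        have hne : piX P X Z w ω ≠ 0 := ne_of_gt (lt_of_lt_of_le hcπ e3)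
        field_simp

/-- **observational outcome-regression identification.** Under treatment
ignorability, monotonicity, principal ignorability and positivity, for every `z ∈ {1,…,J}`
and `g ∈ {J−z+1,…,J}`:
`E[Y_z·1(G=g)] = E[(1(Z=J−g+1)·S/π_{J−g+1}(X) − 1(Z=J−g)·S/π_{J−g}(X)) · m_z(X)]`,
where for `g = J` the subtracted term is taken to be `0`. -/
theorem statement15 (P : Measure Ω) [IsProbabilityMeasure P] (J : ℕ)
    (X : Ω → 𝒳) (Z : Ω → ℕ) (S Y : ℕ → Ω → ℝ)
    (hset : SetupB P J X Z S Y)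
    (hTI : TreatmentIgnorability P J X Z S Y)
    (hmono : Monotonicity P J S)
    (hPI : PrincipalIgnorability P J X S Y)
    (hpos : Positivity P J X S) :
    ∀ z ∈ Finset.Icc 1 J, ∀ g ∈ Finset.Icc (J - z + 1) J,
      ∀ mz : Ω → ℝ, Measurable[mX X] mz →
      ((fun ω => mz ω * piX P X Z z ω * pscore P X S J z ω)
        =ᵐ[P] P[fun ω => Yobs J Z Y ω * Sobs J Z S ω * indic Z z ω | mX X]) →
      ∫ ω, Y z ω * indG J S g ω ∂P
        = ∫ ω,
            (indic Z (J - g + 1) ω * Sobs J Z S ω / piX P X Z (J - g + 1) ω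
              - (if J - g = 0 then 0
                else indic Z (J - g) ω * Sobs J Z S ω / piX P X Z (J - g) ω)) * mz ω ∂P := by
  classical
  intro z hz g hg mz hmzm hmz
  have hm : mX X ≤ ‹MeasurableSpace Ω› := hset.hX.comap_le
  haveI : SigmaFinite (P.trim hm) := inferInstance
  obtain ⟨⟨cπ, hcπ, hπall⟩, hTIfac⟩ := hTI
  obtain ⟨cp, hcp, hpall⟩ := hpos
  have hzJ : 1 ≤ z ∧ z ≤ J := Finset.mem_Icc.1 hz
  have hgJ : J - z + 1 ≤ g ∧ g ≤ J := Finset.mem_Icc.1 hg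
  have hg1 : 1 ≤ g := by omega
  set a : ℕ := J - g + 1 with hadef
  have ha : a ∈ Finset.Icc 1 J := by rw [Finset.mem_Icc]; omega
  obtain ⟨Cy, hCy⟩ := hset.hYbd
  set C : ℝ := max Cy 0 with hCdef
  have hC0 : 0 ≤ C := le_max_right _ _
  have hYC : ∀ v ω, |Y v ω| ≤ C := fun v ω => le_trans (hCy v ω) (le_max_left _ _)
  -- basic bounds
  have hSb : ∀ v ω, |S v ω| ≤ 1 := by
    intro v ω; rcases hset.hS01 v ω with h | h <;> simp [h]
  have hSobs_eq : ∀ ω, Sobs J Z S ω = S (Z ω) ω := fun ω => sum_indic_mul S ω (hset.hZr ω)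
  have hYobs_eq : ∀ ω, Yobs J Z Y ω = Y (Z ω) ω := fun ω => sum_indic_mul Y ω (hset.hZr ω)
  have hSobsb : ∀ ω, |Sobs J Z S ω| ≤ 1 := fun ω => by rw [hSobs_eq]; exact hSb _ ω
  have hps_eq : ∀ w ∈ Finset.Icc 1 J, pscore P X S J w = P[S w | mX X] := by
    intro w hw; rw [Finset.mem_Icc] at hw
    unfold pscore; rw [if_neg (by omega), if_neg (by omega)]
  -- a.e. bound on mz
  have hQbd : ∀ ω, |Yobs J Z Y ω * Sobs J Z S ω * indic Z z ω| ≤ C := by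
    intro ω
    rw [abs_mul, abs_mul]
    calc |Yobs J Z Y ω| * |Sobs J Z S ω| * |indic Z z ω| ≤ C * 1 * 1 := by
          apply mul_le_mul _ (indic_abs_le z ω) (abs_nonneg _) (by positivity)
          apply mul_le_mul _ (hSobsb ω) (abs_nonneg _) hC0
          rw [hYobs_eq]; exact hYC _ ω
      _ = C := by ring
  have hEQbd : ∀ᵐ ω ∂P, |(P[fun ω => Yobs J Z Y ω * Sobs J Z S ω * indic Z z ω | mX X]) ω| ≤ C := by
    have := ae_bdd_condExp_of_ae_bdd (μ := P) (m := mX X)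
      (R := ⟨C, hC0⟩) (f := fun ω => Yobs J Z Y ω * Sobs J Z S ω * indic Z z ω)
      (Filter.Eventually.of_forall hQbd)
    exact this
  set Cm : ℝ := C / (cπ * cp) with hCmdef
  have hmzbd : ∀ᵐ ω ∂P, |mz ω| ≤ Cm := by
    filter_upwards [hmz, hEQbd, hπall z hz, hpall z hz] with ω h1 h2 h3 h4
    have hπpos : 0 < piX P X Z z ω := lt_of_lt_of_le hcπ h3
    have hppos : 0 < pscore P X S J z ω := lt_of_lt_of_le hcp h4
    have key : |mz ω| * (piX P X Z z ω * pscore P X S J z ω) ≤ C := by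
      have : |mz ω * piX P X Z z ω * pscore P X S J z ω| ≤ C := by rw [h1]; exact h2
      rwa [abs_mul, abs_mul, abs_of_pos hπpos, abs_of_pos hppos, mul_assoc] at this
    rw [hCmdef, le_div_iff₀ (by positivity)]
    calc |mz ω| * (cπ * cp) ≤ |mz ω| * (piX P X Z z ω * pscore P X S J z ω) := by
          apply mul_le_mul_of_nonneg_left _ (abs_nonneg _)
          apply mul_le_mul h3 h4 (le_of_lt hcp) (le_of_lt hπpos)
      _ ≤ C := key
  -- a.e. monotone chain and its combinatorial consequences
  have hchain : ∀ᵐ ω ∂P, ∀ w ∈ Finset.Icc 1 J, ∀ w' ∈ Finset.Icc 1 J, w' ≤ w →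
      S w' ω ≤ S w ω := by
    have base : ∀ w w' : ℕ, ∀ᵐ ω ∂P, w ∈ Finset.Icc 1 J → w' ∈ Finset.Icc 1 J → w' ≤ w →
        S w' ω ≤ S w ω := by
      intro w w'
      by_cases h : w ∈ Finset.Icc 1 J ∧ w' ∈ Finset.Icc 1 J ∧ w' ≤ w
      · filter_upwards [hmono w h.1 w' h.2.1 h.2.2] with ω hω _ _ _; exact hω
      · exact Filter.Eventually.of_forall fun ω h1 h2 h3 => absurd ⟨h1, h2, h3⟩ h
    have hcomb := ae_all_iff.2 (fun w => ae_all_iff.2 (fun w' => base w w'))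
    filter_upwards [hcomb] with ω hω w hw w' hw' hle
    exact hω w w' hw hw' hle
  have hfacts : ∀ᵐ ω ∂P, ∃ n : ℕ, n ≤ J ∧ Gsum J S ω = (n : ℝ) ∧
      ∀ w ∈ Finset.Icc 1 J, (S w ω = 1 ↔ J < n + w) := by
    filter_upwards [hchain] with ω hω
    exact chain_facts J (fun w => S w ω) (fun w => hset.hS01 w ω) hω
  -- key identity F1
  have keyF1 : (fun ω => ∑ g' ∈ Finset.Icc (J - z + 1) J, indG J S g' ω) =ᵐ[P] S z := by
    filter_upwards [hfacts] with ω hω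
    obtain ⟨n, hnJ, hGn, hiff⟩ := hω
    have hsum : ∑ g' ∈ Finset.Icc (J - z + 1) J, indG J S g' ω
        = if n ∈ Finset.Icc (J - z + 1) J then (1:ℝ) else 0 := by
      rw [← Finset.sum_ite_eq (Finset.Icc (J - z + 1) J) n (fun _ => (1:ℝ))]
      apply Finset.sum_congr rfl
      intro g' _
      rw [indG_eq, hGn]
      by_cases h : n = g'
      · rw [if_pos (by exact_mod_cast h), if_pos h]
      · rw [if_neg (by exact_mod_cast h), if_neg h]
    rw [hsum]
    have hz' := hiff z hz
    rcases hset.hS01 z ω with h | h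
    · rw [h, if_neg]
      rw [Finset.mem_Icc]
      have : ¬ (J < n + z) := fun hc => by rw [hz'.2 hc] at h; norm_num at h
      omega
    · rw [h, if_pos]
      rw [Finset.mem_Icc]
      have := hz'.1 h
      omega
  -- key identity F2
  have keyF2 : (fun ω => S a ω - (if J - g = 0 then 0 else S (J - g) ω)) =ᵐ[P] indG J S g := by
    filter_upwards [hfacts] with ω hω
    obtain ⟨n, hnJ, hGn, hiff⟩ := hω
    rw [indG_eq, hGn]
    have hSa : S a ω = if J < n + a then (1:ℝ) else 0 := by
      rcases hset.hS01 a ω with h | h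
      · rw [h, if_neg (fun hc => by rw [(hiff a ha).2 hc] at h; norm_num at h)]
      · rw [h, if_pos ((hiff a ha).1 h)]
    have hcast : ((n:ℝ) = (g:ℝ)) ↔ n = g := Nat.cast_inj
    by_cases hb : J - g = 0
    · rw [if_pos hb, sub_zero, hSa]
      split_ifs <;>
        first
          | (norm_num; done)
          | (exfalso; omega)
          | (exfalso; rename_i hx; rw [hcast] at hx; omega)
    · have hbJ : J - g ∈ Finset.Icc 1 J := by rw [Finset.mem_Icc]; omega
      have hSbv : S (J - g) ω = if J < n + (J - g) then (1:ℝ) else 0 := by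
        rcases hset.hS01 (J - g) ω with h | h
        · rw [h, if_neg (fun hc => by rw [(hiff _ hbJ).2 hc] at h; norm_num at h)]
        · rw [h, if_pos ((hiff _ hbJ).1 h)]
      rw [if_neg hb, hSa, hSbv]
      split_ifs <;>
        first
          | (norm_num; done)
          | (exfalso; omega)
          | (exfalso; rename_i hx; rw [hcast] at hx; omega)
  -- Step D: factorization of the observed regression
  have hQeq : (fun ω => Yobs J Z Y ω * Sobs J Z S ω * indic Z z ω)
      = fun ω => indic Z z ω * (Y z ω * S z ω) := by
    funext ω
    by_cases hZω : Z ω = z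
    · rw [hYobs_eq, hSobs_eq, hZω]; ring
    · unfold indic; rw [if_neg hZω]; ring
  set φ2 : (ℕ → ℝ) → (ℕ → ℝ) → ℝ :=
    fun s y => max (-C) (min (y z) C) * max 0 (min (s z) 1) with hφ2def
  have hφ2m : Measurable (Function.uncurry φ2) := by
    apply Measurable.mul
    · exact Measurable.max measurable_const (((measurable_pi_apply z).comp measurable_snd).min measurable_const)
    · exact Measurable.max measurable_const (((measurable_pi_apply z).comp measurable_fst).min measurable_const)
  have hφ2bd : ∃ C', ∀ s y, |φ2 s y| ≤ C' := by
    refine ⟨C * 1, fun s y => ?_⟩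
    rw [hφ2def]
    simp only
    rw [abs_mul]
    apply mul_le_mul ?_ ?_ (abs_nonneg _) hC0
    · rw [abs_le]
      exact ⟨le_max_left _ _, max_le (neg_nonpos_of_nonneg hC0 |>.trans hC0) (min_le_right _ _)⟩
    · rw [abs_le]
      exact ⟨le_trans (by norm_num) (le_max_left 0 _), max_le zero_le_one (min_le_right _ _)⟩
  have hφ2val : ∀ ω', φ2 (fun w => S w ω') (fun w => Y w ω') = Y z ω' * S z ω' := by
    intro ω'
    rw [hφ2def]
    simp only
    rw [min_eq_left (abs_le.1 (hYC z ω')).2, max_eq_right (abs_le.1 (hYC z ω')).1]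
    rcases hset.hS01 z ω' with h | h <;> rw [h] <;> norm_num
  have hfac2 := hTIfac z hz φ2 hφ2m hφ2bd
  have hrw1 : (fun ω => indic Z z ω * φ2 (fun w => S w ω) (fun w => Y w ω))
      = fun ω => indic Z z ω * (Y z ω * S z ω) := funext fun ω => by rw [hφ2val ω]
  have hrw2 : (fun ω' => φ2 (fun w => S w ω') (fun w => Y w ω'))
      = fun ω' => Y z ω' * S z ω' := funext hφ2val
  rw [hrw1, hrw2] at hfac2
  have hD : (fun ω => mz ω * pscore P X S J z ω)
      =ᵐ[P] P[fun ω' => Y z ω' * S z ω' | mX X] := by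
    have h0 : (fun ω => mz ω * piX P X Z z ω * pscore P X S J z ω)
        =ᵐ[P] fun ω => piX P X Z z ω * (P[fun ω' => Y z ω' * S z ω' | mX X]) ω := by
      refine hmz.trans ?_
      rw [hQeq]
      exact hfac2
    filter_upwards [h0, hπall z hz] with ω h1 h2
    have hne : piX P X Z z ω ≠ 0 := ne_of_gt (lt_of_lt_of_le hcπ h2)
    exact mul_left_cancel₀ hne (by rw [← h1]; ring)
  -- Step E: principal ignorability summation
  have hindGb : ∀ g' ω, |indG J S g' ω| ≤ 1 := by
    intro g' ω; rw [indG_eq]; split <;> norm_num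
  have hindGint : ∀ g', Integrable (indG J S g') P :=
    fun g' => integrable_of_bound (indG_measurable hset.hSm g').aestronglyMeasurable 1
      (Filter.Eventually.of_forall (hindGb g'))
  have hYzindGint : ∀ g', Integrable (fun ω => Y z ω * indG J S g' ω) P := by
    intro g'
    apply integrable_of_bound
      ((hset.hYm z).mul (indG_measurable hset.hSm g')).aestronglyMeasurable C
    apply Filter.Eventually.of_forall
    intro ω
    rw [Pi.mul_apply, abs_mul]
    calc |Y z ω| * |indG J S g' ω| ≤ C * 1 :=
          mul_le_mul (hYC z ω) (hindGb g' ω) (abs_nonneg _) hC0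
      _ = C := by ring
  have hsum_e : (fun ω => ∑ g' ∈ Finset.Icc (J - z + 1) J, eg P X J S g' ω)
      =ᵐ[P] pscore P X S J z := by
    have e1 : (∑ g' ∈ Finset.Icc (J - z + 1) J, indG J S g') =ᵐ[P] S z := by
      have he : (∑ g' ∈ Finset.Icc (J - z + 1) J, indG J S g')
          = fun ω => ∑ g' ∈ Finset.Icc (J - z + 1) J, indG J S g' ω := by
        funext ω; exact Finset.sum_apply ω _ _
      rw [he]; exact keyF1
    have h2 := (condExp_finsetSum (μ := P) (m := mX X)
      (f := fun g' => indG J S g') (s := Finset.Icc (J - z + 1) J)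
      (fun i _ => hindGint i)).symm.trans (condExp_congr_ae e1)
    have h3 : (fun ω => ∑ g' ∈ Finset.Icc (J - z + 1) J, eg P X J S g' ω)
        = fun ω => (∑ g' ∈ Finset.Icc (J - z + 1) J, P[indG J S g' | mX X]) ω := by
      funext ω; rw [Finset.sum_apply]; rfl
    rw [h3, hps_eq z hz]
    exact h2
  have hsum_EY : (fun ω => ∑ g' ∈ Finset.Icc (J - z + 1) J,
        (P[fun ω' => Y z ω' * indG J S g' ω' | mX X]) ω)
      =ᵐ[P] P[fun ω' => Y z ω' * S z ω' | mX X] := by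
    have e2 : (∑ g' ∈ Finset.Icc (J - z + 1) J, fun ω' => Y z ω' * indG J S g' ω')
        =ᵐ[P] fun ω' => Y z ω' * S z ω' := by
      filter_upwards [keyF1] with ω hω
      rw [Finset.sum_apply, ← Finset.mul_sum, hω]
    have h2 := (condExp_finsetSum (μ := P) (m := mX X)
      (f := fun g' => fun ω' => Y z ω' * indG J S g' ω')
      (s := Finset.Icc (J - z + 1) J)
      (fun i _ => hYzindGint i)).symm.trans (condExp_congr_ae e2)
    have h3 : (fun ω => ∑ g' ∈ Finset.Icc (J - z + 1) J,
          (P[fun ω' => Y z ω' * indG J S g' ω' | mX X]) ω)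
        = fun ω => (∑ g' ∈ Finset.Icc (J - z + 1) J,
          P[fun ω' => Y z ω' * indG J S g' ω' | mX X]) ω := by
      funext ω; rw [Finset.sum_apply]
    rw [h3]
    exact h2
  have hPIae : ∀ᵐ ω ∂P, ∀ g' ∈ Finset.Icc (J - z + 1) J,
      (P[fun ω' => Y z ω' * indG J S g ω' | mX X]) ω * eg P X J S g' ω
        = (P[fun ω' => Y z ω' * indG J S g' ω' | mX X]) ω * eg P X J S g ω := by
    have base : ∀ g' : ℕ, ∀ᵐ ω ∂P, g' ∈ Finset.Icc (J - z + 1) J →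
        (P[fun ω' => Y z ω' * indG J S g ω' | mX X]) ω * eg P X J S g' ω
          = (P[fun ω' => Y z ω' * indG J S g' ω' | mX X]) ω * eg P X J S g ω := by
      intro g'
      by_cases h : g' ∈ Finset.Icc (J - z + 1) J
      · filter_upwards [hPI z hz g hg g' h] with ω hω _
        exact hω
      · exact Filter.Eventually.of_forall fun ω hc => absurd hc h
    filter_upwards [ae_all_iff.2 base] with ω hω g' hg'
    exact hω g' hg'
  have hE : P[fun ω' => Y z ω' * indG J S g ω' | mX X]
      =ᵐ[P] fun ω => mz ω * eg P X J S g ω := by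
    filter_upwards [hPIae, hsum_e, hsum_EY, hD, hpall z hz] with ω h1 h2 h3 h4 h5
    have hpne : pscore P X S J z ω ≠ 0 := ne_of_gt (lt_of_lt_of_le hcp h5)
    apply mul_right_cancel₀ hpne
    calc (P[fun ω' => Y z ω' * indG J S g ω' | mX X]) ω * pscore P X S J z ω
        = (P[fun ω' => Y z ω' * indG J S g ω' | mX X]) ω
            * ∑ g' ∈ Finset.Icc (J - z + 1) J, eg P X J S g' ω := by rw [h2]
      _ = ∑ g' ∈ Finset.Icc (J - z + 1) J,
            (P[fun ω' => Y z ω' * indG J S g ω' | mX X]) ω * eg P X J S g' ω := by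
          rw [Finset.mul_sum]
      _ = ∑ g' ∈ Finset.Icc (J - z + 1) J,
            (P[fun ω' => Y z ω' * indG J S g' ω' | mX X]) ω * eg P X J S g ω := by
          exact Finset.sum_congr rfl h1
      _ = (∑ g' ∈ Finset.Icc (J - z + 1) J,
            (P[fun ω' => Y z ω' * indG J S g' ω' | mX X]) ω) * eg P X J S g ω := by
          rw [Finset.sum_mul]
      _ = (P[fun ω' => Y z ω' * S z ω' | mX X]) ω * eg P X J S g ω := by rw [h3]
      _ = (mz ω * pscore P X S J z ω) * eg P X J S g ω := by rw [← h4]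
      _ = mz ω * eg P X J S g ω * pscore P X S J z ω := by ring
  -- integrability facts for the final assembly
  have hmzMeas : Measurable mz := hmzm.mono hm le_rfl
  have hSobsMeas : Measurable (Sobs J Z S) :=
    Finset.measurable_sum _ (fun v _ => (indic_measurable hset.hZ v).mul (hset.hSm v))
  have hpiXMeas : ∀ w, Measurable (piX P X Z w) := fun w =>
    (stronglyMeasurable_condExp (m := mX X)).measurable.mono hm le_rfl
  have hpsMeas : ∀ w ∈ Finset.Icc 1 J, Measurable (pscore P X S J w) := by
    intro w hw
    rw [hps_eq w hw]
    exact (stronglyMeasurable_condExp (m := mX X)).measurable.mono hm le_rfl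
  have hAint : ∀ w ∈ Finset.Icc 1 J,
      Integrable (fun ω => (indic Z w ω * Sobs J Z S ω / piX P X Z w ω) * mz ω) P := by
    intro w hw
    apply integrable_of_bound
      ((((indic_measurable hset.hZ w).mul hSobsMeas).div (hpiXMeas w)).mul
        hmzMeas).aestronglyMeasurable ((1 / cπ) * Cm)
    filter_upwards [hπall w hw, hmzbd] with ω e1 e2
    simp only [Pi.mul_apply, Pi.div_apply]
    rw [abs_mul]
    have hπpos : 0 < piX P X Z w ω := lt_of_lt_of_le hcπ e1
    apply mul_le_mul ?_ e2 (abs_nonneg _) (by positivity)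
    rw [abs_div, abs_of_pos hπpos, abs_mul]
    apply div_le_div₀ (by positivity) ?_ hcπ e1
    calc |indic Z w ω| * |Sobs J Z S ω| ≤ 1 * 1 :=
          mul_le_mul (indic_abs_le w ω) (hSobsb ω) (abs_nonneg _) zero_le_one
      _ = 1 := by ring
  have hpsbd : ∀ w ∈ Finset.Icc 1 J, ∀ᵐ ω ∂P, |pscore P X S J w ω| ≤ 1 := by
    intro w hw
    rw [hps_eq w hw]
    have := ae_bdd_condExp_of_ae_bdd (μ := P) (m := mX X) (R := 1) (f := S w)
      (Filter.Eventually.of_forall fun ω => by simpa using hSb w ω)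
    simpa using this
  have hmzpsInt : ∀ w ∈ Finset.Icc 1 J,
      Integrable (fun ω => mz ω * pscore P X S J w ω) P := by
    intro w hw
    apply integrable_of_bound (hmzMeas.mul (hpsMeas w hw)).aestronglyMeasurable (Cm * 1)
    filter_upwards [hmzbd, hpsbd w hw] with ω e1 e2
    rw [Pi.mul_apply, abs_mul]
    exact mul_le_mul e1 e2 (abs_nonneg _) (le_trans (abs_nonneg _) e1)
  have hSint : ∀ w, Integrable (S w) P := fun w =>
    integrable_of_bound (hset.hSm w).aestronglyMeasurable 1
      (Filter.Eventually.of_forall (hSb w))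
  -- left-hand side
  have hLHS : ∫ ω, Y z ω * indG J S g ω ∂P = ∫ ω, mz ω * eg P X J S g ω ∂P := by
    rw [← integral_condExp (μ := P) hm (f := fun ω' => Y z ω' * indG J S g ω')]
    exact integral_congr_ae hE
  -- the reconstructed treatment ignorability bundle
  have hTI' : TreatmentIgnorability P J X Z S Y := ⟨⟨cπ, hcπ, hπall⟩, hTIfac⟩
  have hTermA := term_eq P J X Z S Y hset hTI' a ha cπ hcπ (hπall a ha) mz hmzm Cm hmzbd
  rw [hLHS]
  by_cases hb : J - g = 0
  · have hred : (fun ω => (indic Z a ω * Sobs J Z S ω / piX P X Z a ω -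
        (if J - g = 0 then (0:ℝ)
          else indic Z (J - g) ω * Sobs J Z S ω / piX P X Z (J - g) ω)) * mz ω)
        = fun ω => (indic Z a ω * Sobs J Z S ω / piX P X Z a ω) * mz ω := by
      funext ω; rw [if_pos hb, sub_zero]
    rw [hred, hTermA]
    apply integral_congr_ae
    have hpse : pscore P X S J a =ᵐ[P] eg P X J S g := by
      rw [hps_eq a ha]
      apply condExp_congr_ae
      have := keyF2
      simp only [if_pos hb, sub_zero] at this
      exact this
    exact Filter.EventuallyEq.mul (Filter.EventuallyEq.refl _ mz) hpse.symm
  · have hbmem : J - g ∈ Finset.Icc 1 J := by rw [Finset.mem_Icc]; omega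
    have hTermB := term_eq P J X Z S Y hset hTI' (J - g) hbmem cπ hcπ
      (hπall _ hbmem) mz hmzm Cm hmzbd
    have hred : (fun ω => (indic Z a ω * Sobs J Z S ω / piX P X Z a ω -
        (if J - g = 0 then (0:ℝ)
          else indic Z (J - g) ω * Sobs J Z S ω / piX P X Z (J - g) ω)) * mz ω)
        = fun ω => (indic Z a ω * Sobs J Z S ω / piX P X Z a ω) * mz ω
            - (indic Z (J - g) ω * Sobs J Z S ω / piX P X Z (J - g) ω) * mz ω := by
      funext ω; rw [if_neg hb]; ring
    rw [hred, integral_sub (hAint a ha) (hAint _ hbmem), hTermA, hTermB,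
      ← integral_sub (hmzpsInt a ha) (hmzpsInt _ hbmem)]
    apply integral_congr_ae
    have hsubps : (fun ω => pscore P X S J a ω - pscore P X S J (J - g) ω)
        =ᵐ[P] eg P X J S g := by
      have h1 : P[S a - S (J - g) | mX X] =ᵐ[P] P[indG J S g | mX X] := by
        apply condExp_congr_ae
        have := keyF2
        simp only [if_neg hb] at this
        exact this
      have h2 := condExp_sub (m := mX X) (μ := P) (hSint a) (hSint (J - g))
      filter_upwards [h1.symm.trans h2] with ω hω
      show pscore P X S J a ω - pscore P X S J (J - g) ω = eg P X J S g ω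
      rw [hps_eq a ha, hps_eq _ hbmem]
      have : (P[S a | mX X]) ω - (P[S (J - g) | mX X]) ω
          = (P[S a | mX X] - P[S (J - g) | mX X]) ω := rfl
      rw [this, ← hω]
      rfl
    filter_upwards [hsubps] with ω hω
    show mz ω * eg P X J S g ω
        = mz ω * pscore P X S J a ω - mz ω * pscore P X S J (J - g) ω
    rw [← hω]
    ring


end TruncationByDeath
end
end

section
/- (Conditional bias formula under violation of principal ignorability.) Fix z ∈ {1,...,J} and assume monotonicity, that e_{g′}(X) > 0 P-a.s. for every g′ ∈ {J−z+1,...,J}, and that the bounded measurable sensitivity functions δ_{z,g′} : 𝒳 → ℝ (g′ ∈ {J−z+1,...,J}) satisfy δ_{z,J}(X) = 1 and E[Y_z·1(G=g′) | σ(X)]·e_J(X) = δ_{z,g′}(X)·E[Y_z·1(G=J) | σ(X)]·e_{g′}(X) P-a.s. Then for every g ∈ {J−z+1,...,J}: E[Y_z·1(G=g) | σ(X)]·Σ_{g′=J−z+1}^J δ_{z,g′}(X)·e_{g′}(X) = δ_{z,g}(X)·e_g(X)·E[Y_z·S_z | σ(X)] P-almost surely. -/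
open MeasureTheory ProbabilityTheory

noncomputable section

namespace TruncationByDeath

variable {Ω : Type*} {𝒳 : Type*} [MeasurableSpace Ω] [MeasurableSpace 𝒳]

lemma indG_eq_ite (J : ℕ) (S : ℕ → Ω → ℝ) (g : ℕ) (ω : Ω) :
    indG J S g ω = if Gsum J S ω = (g : ℝ) then 1 else 0 := by
  simp [indG, Set.indicator_apply]

lemma measurable_indG {S : ℕ → Ω → ℝ} (hSm : ∀ z, Measurable (S z)) (J g : ℕ) :
    Measurable (indG J S g) := by
  have hG : Measurable (Gsum J S) := Finset.measurable_sum _ fun z _ => hSm z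
  exact Measurable.indicator measurable_const (hG (measurableSet_singleton _))

lemma Sz_eq_sum_indG {S : ℕ → Ω → ℝ} {J z : ℕ} (hz1 : 1 ≤ z) (hzJ : z ≤ J) (ω : Ω)
    (h01 : ∀ z', S z' ω = 0 ∨ S z' ω = 1)
    (hm : ∀ z'' ∈ Finset.Icc 1 J, ∀ z' ∈ Finset.Icc 1 J, z' ≤ z'' → S z' ω ≤ S z'' ω) :
    S z ω = ∑ g ∈ Finset.Icc (J - z + 1) J, indG J S g ω := by
  classical
  set n : ℕ := ((Finset.Icc 1 J).filter fun z' => S z' ω = 1).card with hn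
  have hGn : Gsum J S ω = (n : ℝ) := by
    have : ∀ z' ∈ Finset.Icc 1 J, S z' ω = if S z' ω = 1 then (1 : ℝ) else 0 := by
      intro z' _
      rcases h01 z' with h | h <;> simp [h]
    rw [Gsum, Finset.sum_congr rfl this, Finset.sum_boole]
  have hsum : ∑ g ∈ Finset.Icc (J - z + 1) J, indG J S g ω
      = if n ∈ Finset.Icc (J - z + 1) J then (1 : ℝ) else 0 := by
    have : ∀ g ∈ Finset.Icc (J - z + 1) J,
        indG J S g ω = if n = g then (1 : ℝ) else 0 := by
      intro g _
      rw [indG_eq_ite, hGn]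
      simp [Nat.cast_inj]
    rw [Finset.sum_congr rfl this, Finset.sum_ite_eq]
  have hnJ : n ≤ J := by
    have := Finset.card_filter_le (Finset.Icc 1 J) (fun z' => S z' ω = 1)
    simpa using this
  rcases h01 z with h0 | h1
  · -- S z ω = 0 : every surviving index is > z, so n ≤ J - z
    have hsubset : ((Finset.Icc 1 J).filter fun z' => S z' ω = 1) ⊆ Finset.Icc (z + 1) J := by
      intro z' hz'
      rw [Finset.mem_filter] at hz'
      obtain ⟨hz'mem, hz'1⟩ := hz'
      rw [Finset.mem_Icc] at hz'mem ⊢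
      refine ⟨?_, hz'mem.2⟩
      by_contra hlt
      push_neg at hlt
      have hle : z' ≤ z := by omega
      have := hm z (Finset.mem_Icc.mpr ⟨hz1, hzJ⟩) z'
        (Finset.mem_Icc.mpr ⟨hz'mem.1, hz'mem.2⟩) hle
      rw [hz'1, h0] at this
      linarith
    have hcard : n ≤ J - z := by
      have := Finset.card_le_card hsubset
      rw [Nat.card_Icc] at this
      omega
    have : n ∉ Finset.Icc (J - z + 1) J := by
      rw [Finset.mem_Icc]; omega
    rw [hsum, if_neg this, h0]
  · -- S z ω = 1 : all indices ≥ z survive, so n ≥ J - z + 1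
    have hsubset : Finset.Icc z J ⊆ ((Finset.Icc 1 J).filter fun z' => S z' ω = 1) := by
      intro z' hz'
      rw [Finset.mem_Icc] at hz'
      rw [Finset.mem_filter, Finset.mem_Icc]
      refine ⟨⟨le_trans hz1 hz'.1, hz'.2⟩, ?_⟩
      have hle := hm z' (Finset.mem_Icc.mpr ⟨le_trans hz1 hz'.1, hz'.2⟩) z
        (Finset.mem_Icc.mpr ⟨hz1, hzJ⟩) hz'.1
      rw [h1] at hle
      rcases h01 z' with h | h
      · rw [h] at hle; linarith
      · exact h
    have hcard : J - z + 1 ≤ n := by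
      have := Finset.card_le_card hsubset
      rw [Nat.card_Icc] at this
      omega
    have : n ∈ Finset.Icc (J - z + 1) J := Finset.mem_Icc.mpr ⟨hcard, hnJ⟩
    rw [hsum, if_pos this, h1]

/-- **conditional bias formula under violation of principal ignorability.**
With reference stratum `J` and sensitivity functions `δ_{z,g'}`, for every
`g ∈ {J−z+1,…,J}`,
`E[Y_z·1(G=g)|σ(X)] · ∑_{g'} δ_{z,g'}(X)·e_{g'}(X) = δ_{z,g}(X)·e_g(X)·E[Y_z·S_z|σ(X)]`
`P`-almost surely. -/
theorem statement16 (P : Measure Ω) [IsProbabilityMeasure P] (J : ℕ)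
    (X : Ω → 𝒳) (Z : Ω → ℕ) (S Y : ℕ → Ω → ℝ)
    (hset : Setup P J X Z S Y)
    (hmono : Monotonicity P J S)
    (z : ℕ) (hz : z ∈ Finset.Icc 1 J)
    (hepos : ∀ g' ∈ Finset.Icc (J - z + 1) J, ∀ᵐ ω ∂P, 0 < eg P X J S g' ω)
    (δ : ℕ → 𝒳 → ℝ)
    (hδm : ∀ g' ∈ Finset.Icc (J - z + 1) J, Measurable (δ g'))
    (hδb : ∀ g' ∈ Finset.Icc (J - z + 1) J, ∃ C, ∀ x, |δ g' x| ≤ C)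
    (hδJ : ∀ x, δ J x = 1)
    (hδdef : ∀ g' ∈ Finset.Icc (J - z + 1) J,
      (fun ω => (P[fun ω' => Y z ω' * indG J S g' ω' | mX X]) ω * eg P X J S J ω)
        =ᵐ[P] fun ω =>
          δ g' (X ω) * (P[fun ω' => Y z ω' * indG J S J ω' | mX X]) ω * eg P X J S g' ω) :
    ∀ g ∈ Finset.Icc (J - z + 1) J,
      (fun ω => (P[fun ω' => Y z ω' * indG J S g ω' | mX X]) ω
          * ∑ g' ∈ Finset.Icc (J - z + 1) J, δ g' (X ω) * eg P X J S g' ω)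
        =ᵐ[P] fun ω =>
          δ g (X ω) * eg P X J S g ω * (P[fun ω' => Y z ω' * S z ω' | mX X]) ω := by
  classical
  intro g hg
  obtain ⟨hz1, hzJ⟩ := Finset.mem_Icc.mp hz
  have hJmem : J ∈ Finset.Icc (J - z + 1) J := Finset.mem_Icc.mpr ⟨by omega, le_rfl⟩
  -- integrability of Y z * indG g'
  have hint : ∀ g' : ℕ, Integrable (fun ω => Y z ω * indG J S g' ω) P := by
    intro g'
    have h1 : Integrable (fun ω => indG J S g' ω * Y z ω) P := by
      refine Integrable.bdd_mul (hset.hYint z)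
        (measurable_indG hset.hSm J g').aestronglyMeasurable (c := 1) (ae_of_all _ fun ω => ?_)
      rw [indG_eq_ite]
      split <;> simp
    simpa [mul_comm] using h1
  -- a.e. monotonicity over all pairs
  have hmono' : ∀ᵐ ω ∂P, ∀ z'' : ℕ, ∀ z' : ℕ, z'' ∈ Finset.Icc 1 J → z' ∈ Finset.Icc 1 J →
      z' ≤ z'' → S z' ω ≤ S z'' ω := by
    rw [ae_all_iff]
    intro z''
    rw [ae_all_iff]
    intro z'
    by_cases h1 : z'' ∈ Finset.Icc 1 J
    · by_cases h2 : z' ∈ Finset.Icc 1 J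
      · by_cases h3 : z' ≤ z''
        · filter_upwards [hmono z'' h1 z' h2 h3] with ω h _ _ _
          exact h
        · filter_upwards with ω _ _ h
          exact absurd h h3
      · filter_upwards with ω _ h
        exact absurd h h2
    · filter_upwards with ω h
      exact absurd h h1
  -- Y z * S z = ∑ Y z * indG a.e.
  have hdecomp : (fun ω => Y z ω * S z ω)
      =ᵐ[P] fun ω => ∑ g' ∈ Finset.Icc (J - z + 1) J, Y z ω * indG J S g' ω := by
    filter_upwards [hmono'] with ω hm
    rw [Sz_eq_sum_indG hz1 hzJ ω (fun z' => hset.hS01 z' ω) (fun a ha b hb => hm a b ha hb), Finset.mul_sum]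
  -- conditional expectation of Y z * S z decomposes as a sum
  have hce : (P[fun ω' => Y z ω' * S z ω' | mX X])
      =ᵐ[P] fun ω => ∑ g' ∈ Finset.Icc (J - z + 1) J,
        (P[fun ω' => Y z ω' * indG J S g' ω' | mX X]) ω := by
    refine (condExp_congr_ae hdecomp).trans ?_
    have h := condExp_finsetSum (μ := P) (m := mX X) (s := Finset.Icc (J - z + 1) J)
      (f := fun g' ω => Y z ω * indG J S g' ω) (fun g' _ => hint g')
    have heq : (fun ω => ∑ g' ∈ Finset.Icc (J - z + 1) J, Y z ω * indG J S g' ω)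
        = ∑ g' ∈ Finset.Icc (J - z + 1) J, (fun ω => Y z ω * indG J S g' ω) := by
      ext ω; simp
    rw [heq]
    refine h.trans ?_
    filter_upwards with ω
    simp
  -- collect the δ identities over the finite index set
  have hδall : ∀ᵐ ω ∂P, ∀ g' ∈ Finset.Icc (J - z + 1) J,
      (P[fun ω' => Y z ω' * indG J S g' ω' | mX X]) ω * eg P X J S J ω
        = δ g' (X ω) * (P[fun ω' => Y z ω' * indG J S J ω' | mX X]) ω * eg P X J S g' ω := by
    rw [(Finset.Icc (J - z + 1) J).eventually_all]
    intro g' hg'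
    exact hδdef g' hg'
  filter_upwards [hce, hδall, hepos J hJmem] with ω hceω hδω heJ
  set eJ := eg P X J S J ω with heJdef
  have hne : eJ ≠ 0 := ne_of_gt heJ
  set EJ := (P[fun ω' => Y z ω' * indG J S J ω' | mX X]) ω with hEJ
  -- cancel eJ
  refine mul_right_cancel₀ hne ?_
  have hsumδ : ∑ g' ∈ Finset.Icc (J - z + 1) J,
      (P[fun ω' => Y z ω' * indG J S g' ω' | mX X]) ω * eJ
      = ∑ g' ∈ Finset.Icc (J - z + 1) J, δ g' (X ω) * EJ * eg P X J S g' ω := by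
    refine Finset.sum_congr rfl fun g' hg' => ?_
    exact hδω g' hg'
  have hgω := hδω g hg
  calc (P[fun ω' => Y z ω' * indG J S g ω' | mX X]) ω
        * (∑ g' ∈ Finset.Icc (J - z + 1) J, δ g' (X ω) * eg P X J S g' ω) * eJ
      = ((P[fun ω' => Y z ω' * indG J S g ω' | mX X]) ω * eJ)
        * (∑ g' ∈ Finset.Icc (J - z + 1) J, δ g' (X ω) * eg P X J S g' ω) := by ring
    _ = (δ g (X ω) * EJ * eg P X J S g ω)
        * (∑ g' ∈ Finset.Icc (J - z + 1) J, δ g' (X ω) * eg P X J S g' ω) := by rw [hgω]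
    _ = (δ g (X ω) * eg P X J S g ω)
        * (∑ g' ∈ Finset.Icc (J - z + 1) J, δ g' (X ω) * EJ * eg P X J S g' ω) := by
        rw [Finset.mul_sum, Finset.mul_sum]
        exact Finset.sum_congr rfl fun i _ => by ring
    _ = (δ g (X ω) * eg P X J S g ω)
        * (∑ g' ∈ Finset.Icc (J - z + 1) J,
            (P[fun ω' => Y z ω' * indG J S g' ω' | mX X]) ω * eJ) := by rw [hsumδ]
    _ = δ g (X ω) * eg P X J S g ω * (P[fun ω' => Y z ω' * S z ω' | mX X]) ω * eJ := by
        rw [← Finset.sum_mul, hceω]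
        ring

end TruncationByDeath
end
end

section
/- (Bias-corrected weighting identification under violation of principal ignorability.) Fix z ∈ {1,...,J} and g ∈ {J−z+1,...,J}. Assume randomization, monotonicity, the positivity condition, that e_{g′}(X) > 0 P-a.s. for every g′ ∈ {J−z+1,...,J}, that the bounded measurable sensitivity functions δ_{z,g′} : 𝒳 → ℝ satisfy δ_{z,J}(X) = 1 and E[Y_z·1(G=g′) | σ(X)]·e_J(X) = δ_{z,g′}(X)·E[Y_z·1(G=J) | σ(X)]·e_{g′}(X) P-a.s., and that there is c′ > 0 with Σ_{g′=J−z+1}^J δ_{z,g′}(X)·(p_{J−g′+1}(X) − p_{J−g′}(X)) ≥ c′ P-a.s. Define Ω_{zg}(X) := δ_{z,g}(X)·p_z(X)/Σ_{g′=J−z+1}^J δ_{z,g′}(X)·(p_{J−g′+1}(X) − p_{J−g′}(X)). Then π_z·E[Y_z·1(G=g)] = E[Ω_{zg}(X)·((p_{J−g+1}(X) − p_{J−g}(X))/p_z(X))·Y·S·1(Z=z)]. -/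
open MeasureTheory ProbabilityTheory

noncomputable section

namespace TruncationByDeath

variable {Ω : Type*} {𝒳 : Type*} [MeasurableSpace Ω] [MeasurableSpace 𝒳]

/-- A.e. statements over a finite index set can be gathered. -/
lemma ae_finset_all {P : Measure Ω} {s : Finset ℕ} {p : ℕ → Ω → Prop}
    (h : ∀ i ∈ s, ∀ᵐ ω ∂P, p i ω) : ∀ᵐ ω ∂P, ∀ i ∈ s, p i ω := by
  rw [MeasureTheory.ae_all_iff]
  intro i
  by_cases hi : i ∈ s
  · filter_upwards [h i hi] with ω hω _
    exact hω
  · exact Filter.Eventually.of_forall fun ω hmem => absurd hmem hi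

/-- Combinatorial core: for a monotone {0,1}-valued sequence on `Icc 1 J`,
the indicator of `∑ = g'` equals a difference of consecutive values. -/
lemma indic_sum_eq (s : ℕ → ℝ) (J g' : ℕ)
    (h01 : ∀ k ∈ Finset.Icc 1 J, s k = 0 ∨ s k = 1)
    (hmono : ∀ k ∈ Finset.Icc 1 J, ∀ k' ∈ Finset.Icc 1 J, k' ≤ k → s k' ≤ s k)
    (hg1 : 1 ≤ g') (hgJ : g' ≤ J) :
    (if (∑ k ∈ Finset.Icc 1 J, s k) = (g' : ℝ) then (1:ℝ) else 0)
      = s (J - g' + 1) - (if J - g' = 0 then 0 else s (J - g')) := by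
  have hIcc : Finset.Icc 1 J = Finset.Ioc 0 J := by
    ext k; simp [Nat.lt_iff_add_one_le]
  set a := J - g' with ha
  have haJ : a + 1 ≤ J := by omega
  have hub : ∀ k ∈ Finset.Icc 1 J, s k ≤ 1 := by
    intro k hk; rcases h01 k hk with h | h <;> simp [h]
  have hlb : ∀ k ∈ Finset.Icc 1 J, 0 ≤ s k := by
    intro k hk; rcases h01 k hk with h | h <;> simp [h]
  by_cases h1 : s (a + 1) = 1
  · by_cases h2 : a = 0 ∨ s a = 0
    · -- sum = g'
      have hsum : (∑ k ∈ Finset.Icc 1 J, s k) = (g' : ℝ) := by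
        rw [hIcc, ← Finset.sum_Ioc_consecutive _ (Nat.zero_le a) (by omega : a ≤ J)]
        have hz : ∀ k ∈ Finset.Ioc 0 a, s k = 0 := by
          intro k hk
          simp only [Finset.mem_Ioc] at hk
          rcases h2 with h2 | h2
          · omega
          · have hka : k ∈ Finset.Icc 1 J := by simp only [Finset.mem_Icc]; omega
            have haI : a ∈ Finset.Icc 1 J := by simp only [Finset.mem_Icc]; omega
            have := hmono a haI k hka hk.2
            rcases h01 k hka with h | h
            · exact h
            · rw [h, h2] at this; linarith
        have ho : ∀ k ∈ Finset.Ioc a J, s k = 1 := by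
          intro k hk
          simp only [Finset.mem_Ioc] at hk
          have hka : k ∈ Finset.Icc 1 J := by simp only [Finset.mem_Icc]; omega
          have haI : a + 1 ∈ Finset.Icc 1 J := by simp only [Finset.mem_Icc]; omega
          have := hmono k hka (a+1) haI (by omega)
          rcases h01 k hka with h | h
          · rw [h, h1] at this; linarith
          · exact h
        rw [Finset.sum_congr rfl hz, Finset.sum_congr rfl ho]
        simp only [Finset.sum_const_zero, Finset.sum_const, Nat.card_Ioc, zero_add,
          nsmul_eq_mul, mul_one]
        congr 1
        omega
      rw [if_pos hsum]
      rcases h2 with h2 | h2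
      · rw [if_pos h2, h1]; norm_num
      · by_cases h3 : a = 0
        · rw [if_pos h3, h1]; norm_num
        · rw [if_neg h3, h2, h1]; ring
    · -- a ≠ 0 and s a = 1 : sum ≥ g' + 1
      push_neg at h2
      obtain ⟨h2a, h2s⟩ := h2
      have haI : a ∈ Finset.Icc 1 J := by simp only [Finset.mem_Icc]; omega
      have hsa : s a = 1 := by
        rcases h01 a haI with h | h
        · exact absurd h h2s
        · exact h
      have hbound : (g' : ℝ) + 1 ≤ ∑ k ∈ Finset.Icc 1 J, s k := by
        rw [hIcc, ← Finset.sum_Ioc_consecutive _ (Nat.zero_le (a-1)) (by omega : a - 1 ≤ J)]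
        have ho : ∀ k ∈ Finset.Ioc (a-1) J, s k = 1 := by
          intro k hk
          simp only [Finset.mem_Ioc] at hk
          have hka : k ∈ Finset.Icc 1 J := by simp only [Finset.mem_Icc]; omega
          have := hmono k hka a haI (by omega)
          rcases h01 k hka with h | h
          · rw [h, hsa] at this; linarith
          · exact h
        have h0 : (0:ℝ) ≤ ∑ k ∈ Finset.Ioc 0 (a-1), s k := by
          apply Finset.sum_nonneg
          intro k hk
          simp only [Finset.mem_Ioc] at hk
          exact hlb k (by simp only [Finset.mem_Icc]; omega)
        have hcard : (∑ k ∈ Finset.Ioc (a-1) J, s k) = ((J - (a-1) : ℕ) : ℝ) := by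
          rw [Finset.sum_congr rfl ho]
          simp [Nat.card_Ioc]
        have hcast : ((J - (a-1) : ℕ) : ℝ) = (g' : ℝ) + 1 := by
          have h' : J - (a-1) = g' + 1 := by omega
          rw [h']; push_cast; ring
        rw [hcard, hcast]
        linarith
      have hne : (∑ k ∈ Finset.Icc 1 J, s k) ≠ (g' : ℝ) := by
        intro h; rw [h] at hbound; linarith
      rw [if_neg hne, if_neg h2a, h1, hsa]; ring
  · -- s (a+1) = 0 : sum ≤ g' - 1
    have h1' : s (a+1) = 0 := by
      have hm : a + 1 ∈ Finset.Icc 1 J := by simp only [Finset.mem_Icc]; omega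
      rcases h01 _ hm with h | h
      · exact h
      · exact absurd h h1
    have hbound : (∑ k ∈ Finset.Icc 1 J, s k) ≤ (g' : ℝ) - 1 := by
      rw [hIcc, ← Finset.sum_Ioc_consecutive _ (Nat.zero_le (a+1)) haJ]
      have hz : ∀ k ∈ Finset.Ioc 0 (a+1), s k = 0 := by
        intro k hk
        simp only [Finset.mem_Ioc] at hk
        have hka : k ∈ Finset.Icc 1 J := by simp only [Finset.mem_Icc]; omega
        have haI : a + 1 ∈ Finset.Icc 1 J := by simp only [Finset.mem_Icc]; omega
        have := hmono (a+1) haI k hka hk.2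
        rcases h01 k hka with h | h
        · exact h
        · rw [h, h1'] at this; linarith
      rw [Finset.sum_congr rfl hz]
      simp only [Finset.sum_const_zero, zero_add]
      calc (∑ k ∈ Finset.Ioc (a+1) J, s k) ≤ ∑ _k ∈ Finset.Ioc (a+1) J, (1:ℝ) := by
            apply Finset.sum_le_sum
            intro k hk
            simp only [Finset.mem_Ioc] at hk
            exact hub k (by simp only [Finset.mem_Icc]; omega)
        _ = ((J - (a+1) : ℕ) : ℝ) := by simp [Nat.card_Ioc]
        _ = (g' : ℝ) - 1 := by
            have h' : J - (a+1) = g' - 1 := by omega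
            rw [h']
            have : (g' : ℝ) = ((g' - 1 : ℕ) : ℝ) + 1 := by
              push_cast [Nat.cast_sub hg1]; ring
            rw [this]; ring
    have hne : (∑ k ∈ Finset.Icc 1 J, s k) ≠ (g' : ℝ) := by
      intro h; rw [h] at hbound; linarith
    rw [if_neg hne, h1']
    by_cases h3 : a = 0
    · simp [h3]
    · have haI : a ∈ Finset.Icc 1 J := by simp only [Finset.mem_Icc]; omega
      have ha1I : a + 1 ∈ Finset.Icc 1 J := by simp only [Finset.mem_Icc]; omega
      have hma := hmono (a+1) ha1I a haI (by omega)
      have h0 : s a = 0 := by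
        rcases h01 a haI with h | h
        · exact h
        · rw [h, h1'] at hma; linarith
      simp [h3, h0]

/-- **bias-corrected weighting identification under violation of principal
ignorability.** With the sensitivity weight
`Ω_{zg}(X) := δ_{z,g}(X)·p_z(X) / ∑_{g'} δ_{z,g'}(X)·(p_{J−g'+1}(X) − p_{J−g'}(X))`,
one has `π_z·E[Y_z·1(G=g)] = E[Ω_{zg}(X)·((p_{J−g+1}(X) − p_{J−g}(X))/p_z(X))·Y·S·1(Z=z)]`. -/
theorem statement17 (P : Measure Ω) [IsProbabilityMeasure P] (J : ℕ)
    (X : Ω → 𝒳) (Z : Ω → ℕ) (S Y : ℕ → Ω → ℝ)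
    (hset : Setup P J X Z S Y)
    (hrand : Randomization P J X Z S Y)
    (hmono : Monotonicity P J S)
    (hpos : Positivity P J X S)
    (z g : ℕ) (hz : z ∈ Finset.Icc 1 J) (hg : g ∈ Finset.Icc (J - z + 1) J)
    (hepos : ∀ g' ∈ Finset.Icc (J - z + 1) J, ∀ᵐ ω ∂P, 0 < eg P X J S g' ω)
    (δ : ℕ → 𝒳 → ℝ)
    (hδm : ∀ g' ∈ Finset.Icc (J - z + 1) J, Measurable (δ g'))
    (hδb : ∀ g' ∈ Finset.Icc (J - z + 1) J, ∃ C, ∀ x, |δ g' x| ≤ C)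
    (hδJ : ∀ x, δ J x = 1)
    (hδdef : ∀ g' ∈ Finset.Icc (J - z + 1) J,
      (fun ω => (P[fun ω' => Y z ω' * indG J S g' ω' | mX X]) ω * eg P X J S J ω)
        =ᵐ[P] fun ω =>
          δ g' (X ω) * (P[fun ω' => Y z ω' * indG J S J ω' | mX X]) ω * eg P X J S g' ω)
    (hden : ∃ c' : ℝ, 0 < c' ∧ ∀ᵐ ω ∂P,
      c' ≤ ∑ g' ∈ Finset.Icc (J - z + 1) J,
        δ g' (X ω) * (pscore P X S J (J - g' + 1) ω - pscore P X S J (J - g') ω)) :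
    piZ P Z z * ∫ ω, Y z ω * indG J S g ω ∂P
      = ∫ ω,
          (δ g (X ω) * pscore P X S J z ω
              / ∑ g' ∈ Finset.Icc (J - z + 1) J,
                  δ g' (X ω) * (pscore P X S J (J - g' + 1) ω - pscore P X S J (J - g') ω))
            * ((pscore P X S J (J - g + 1) ω - pscore P X S J (J - g) ω)
                / pscore P X S J z ω)
            * (Yobs J Z Y ω * Sobs J Z S ω * indic Z z ω) ∂P := by
  classical
  obtain ⟨hindep, hπ⟩ := hrand
  obtain ⟨c, hc, hcp⟩ := hpos
  obtain ⟨c', hc', hcD⟩ := hden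
  obtain ⟨Cg, hCgb⟩ := hδb g hg
  have hz1 : 1 ≤ z := (Finset.mem_Icc.mp hz).1
  have hzJ : z ≤ J := (Finset.mem_Icc.mp hz).2
  have hgl : J - z + 1 ≤ g := (Finset.mem_Icc.mp hg).1
  have hgJ : g ≤ J := (Finset.mem_Icc.mp hg).2
  have hg1 : 1 ≤ g := by omega
  have hJmem : J ∈ Finset.Icc (J - z + 1) J := Finset.mem_Icc.mpr ⟨by omega, le_rfl⟩
  have hsub : ∀ g' ∈ Finset.Icc (J - z + 1) J, g' ∈ Finset.Icc 1 J := by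
    intro g' h'
    simp only [Finset.mem_Icc] at *
    omega
  have hm : mX X ≤ (inferInstance : MeasurableSpace Ω) :=
    measurable_iff_comap_le.mp hset.hX
  haveI : SigmaFinite (P.trim hm) := inferInstance
  set p : ℕ → Ω → ℝ := pscore P X S J with hpdef
  set q : ℕ → Ω → ℝ := fun g' ω => p (J - g' + 1) ω - p (J - g') ω with hqdef
  set D : Ω → ℝ := fun ω => ∑ g' ∈ Finset.Icc (J - z + 1) J, δ g' (X ω) * q g' ω with hDdef
  set w : Ω → ℝ := fun ω => δ g (X ω) * p z ω / D ω * (q g ω / p z ω) with hwdef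
  set cm : ℕ → Ω → ℝ := fun g' => P[fun ω' => Y z ω' * indG J S g' ω' | mX X] with hcmdef
  show piZ P Z z * ∫ ω, Y z ω * indG J S g ω ∂P
      = ∫ ω, w ω * (Yobs J Z Y ω * Sobs J Z S ω * indic Z z ω) ∂P
  -- basic facts about the principal scores
  have hpk : ∀ k, 1 ≤ k → k ≤ J → p k = P[S k | mX X] := by
    intro k h1 h2
    rw [hpdef]
    unfold pscore
    rw [if_neg (by omega), if_neg (by omega)]
  have hp0 : p 0 = fun _ => (0:ℝ) := by
    rw [hpdef]; unfold pscore; simp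
  have hSint : ∀ k, Integrable (S k) P := by
    intro k
    refine (integrable_const (1:ℝ)).mono' (hset.hSm k).aestronglyMeasurable ?_
    exact Filter.Eventually.of_forall fun ω => by rcases hset.hS01 k ω with h | h <;> simp [h]
  have hGm : Measurable (Gsum J S) := by
    unfold Gsum
    exact Finset.measurable_sum _ fun k _ => hset.hSm k
  have hindGm : ∀ g', Measurable (indG J S g') := by
    intro g'
    unfold indG
    exact measurable_const.indicator (hGm (measurableSet_singleton _))
  have hindG_bd : ∀ g' ω, ‖indG J S g' ω‖ ≤ 1 := by
    intro g' ω
    unfold indG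
    rw [Set.indicator_apply]
    split_ifs <;> simp
  have hindGint : ∀ g', Integrable (fun ω => Y z ω * indG J S g' ω) P := by
    intro g'
    have h := (hset.hYint z).bdd_mul (hindGm g').aestronglyMeasurable
      (c := 1) (Filter.Eventually.of_forall fun ω => hindG_bd g' ω)
    exact h.congr (Filter.Eventually.of_forall fun ω => mul_comm _ _)
  -- measurability with respect to σ(X)
  have hXm : Measurable[mX X] X := measurable_iff_comap_le.mpr le_rfl
  have hpm : ∀ k, Measurable[mX X] (p k) := by
    intro k
    rw [hpdef]
    unfold pscore
    split_ifs
    · exact measurable_const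
    · exact measurable_const
    · exact stronglyMeasurable_condExp.measurable
  have hqm : ∀ g', Measurable[mX X] (q g') := fun g' => (hpm _).sub (hpm _)
  have hδgm : ∀ g' ∈ Finset.Icc (J - z + 1) J, Measurable[mX X] fun ω => δ g' (X ω) :=
    fun g' h' => (hδm g' h').comp hXm
  have hDm : Measurable[mX X] D :=
    Finset.measurable_sum _ fun g' h' => (hδgm g' h').mul (hqm g')
  have hwm : Measurable[mX X] w :=
    (((hδgm g hg).mul (hpm z)).div hDm).mul ((hqm g).div (hpm z))
  have hwsm : StronglyMeasurable[mX X] w := hwm.stronglyMeasurable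
  -- a.e. bounds
  have hple : ∀ k, 1 ≤ k → k ≤ J → (∀ᵐ ω ∂P, 0 ≤ p k ω ∧ p k ω ≤ 1) := by
    intro k h1 h2
    have hnn : 0 ≤ᵐ[P] P[S k | mX X] :=
      condExp_nonneg (Filter.Eventually.of_forall fun ω => by
        rcases hset.hS01 k ω with h | h <;> simp [h])
    have hub : P[S k | mX X] ≤ᵐ[P] P[(fun _ => (1:ℝ)) | mX X] :=
      condExp_mono (hSint k) (integrable_const 1) (Filter.Eventually.of_forall fun ω => by
        rcases hset.hS01 k ω with h | h <;> simp [h])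
    have hc1 : P[(fun _ => (1:ℝ)) | mX X] = fun _ => (1:ℝ) := condExp_const hm 1
    rw [hpk k h1 h2]
    filter_upwards [hnn, hub] with ω hω1 hω2
    rw [hc1] at hω2
    exact ⟨hω1, hω2⟩
  have hpabs : ∀ k, k ≤ J → ∀ᵐ ω ∂P, |p k ω| ≤ 1 := by
    intro k hk
    rcases Nat.eq_zero_or_pos k with h0 | h1
    · subst h0
      rw [hp0]
      exact Filter.Eventually.of_forall (by simp)
    · filter_upwards [hple k h1 hk] with ω hω
      rw [abs_le]
      exact ⟨by linarith [hω.1], hω.2⟩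
  have hpz_ae : ∀ᵐ ω ∂P, c ≤ p z ω := hcp z hz
  have hD_ae : ∀ᵐ ω ∂P, c' ≤ D ω := hcD
  have hqg_ae : ∀ᵐ ω ∂P, |q g ω| ≤ 2 := by
    filter_upwards [hpabs (J - g + 1) (by omega), hpabs (J - g) (by omega)] with ω h1 h2
    have hqv : q g ω = p (J - g + 1) ω - p (J - g) ω := rfl
    rw [hqv]
    have h1' := abs_le.mp h1
    have h2' := abs_le.mp h2
    rw [abs_le]
    constructor <;> [linarith [h1'.1, h2'.2]; linarith [h1'.2, h2'.1]]
  have hw_ae : ∀ᵐ ω ∂P, ‖w ω‖ ≤ |Cg| / c' * (2 / c) := by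
    filter_upwards [hD_ae, hpz_ae, hqg_ae, hpabs z hzJ] with ω h1 h2 h3 h4
    have hwω : w ω = δ g (X ω) * p z ω / D ω * (q g ω / p z ω) := rfl
    rw [Real.norm_eq_abs, hwω, abs_mul, abs_div, abs_div]
    have hDb : c' ≤ |D ω| := h1.trans (le_abs_self _)
    have hpzb : c ≤ |p z ω| := h2.trans (le_abs_self _)
    have e1 : |δ g (X ω) * p z ω| / |D ω| ≤ |Cg| / c' := by
      refine div_le_div₀ (abs_nonneg Cg) ?_ hc' hDb
      rw [abs_mul]
      calc |δ g (X ω)| * |p z ω| ≤ |Cg| * 1 :=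
            mul_le_mul ((hCgb _).trans (le_abs_self _)) h4 (abs_nonneg _) (abs_nonneg _)
        _ = |Cg| := mul_one _
    have e2 : |q g ω| / |p z ω| ≤ 2 / c := div_le_div₀ (by norm_num) h3 hc hpzb
    exact mul_le_mul e1 e2 (div_nonneg (abs_nonneg _) (abs_nonneg _))
      (div_nonneg (abs_nonneg _) hc'.le)
  have hwasm : AEStronglyMeasurable w P := (hwsm.mono hm).aestronglyMeasurable
  have hwint_mul : ∀ f : Ω → ℝ, Integrable f P → Integrable (fun ω => w ω * f ω) P :=
    fun f hf => hf.bdd_mul hwasm hw_ae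
  -- monotonicity consequences
  have hmAE : ∀ᵐ ω ∂P, ∀ k ∈ Finset.Icc 1 J, ∀ k' ∈ Finset.Icc 1 J, k' ≤ k → S k' ω ≤ S k ω := by
    apply ae_finset_all
    intro k hk
    apply ae_finset_all
    intro k' hk'
    by_cases hle : k' ≤ k
    · filter_upwards [hmono k hk k' hk' hle] with ω hω _
      exact hω
    · exact Filter.Eventually.of_forall fun ω h => absurd h hle
  have hindG_eq : ∀ g' ∈ Finset.Icc 1 J, indG J S g'
      =ᵐ[P] fun ω => S (J - g' + 1) ω - (if J - g' = 0 then 0 else S (J - g') ω) := by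
    intro g' hg'
    filter_upwards [hmAE] with ω hω
    have h := indic_sum_eq (fun k => S k ω) J g' (fun k _ => hset.hS01 k ω)
      (fun k hk k' hk' hle => hω k hk k' hk' hle)
      (Finset.mem_Icc.mp hg').1 (Finset.mem_Icc.mp hg').2
    have h2 : indG J S g' ω = if Gsum J S ω = (g' : ℝ) then (1:ℝ) else 0 := by
      simp only [indG, Set.indicator_apply, Set.mem_setOf_eq]
    rw [h2]
    exact h
  have hSz_eq : (fun ω => S z ω)
      =ᵐ[P] fun ω => ∑ g' ∈ Finset.Icc (J - z + 1) J, indG J S g' ω := by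
    have hall : ∀ᵐ ω ∂P, ∀ g' ∈ Finset.Icc (J - z + 1) J,
        indG J S g' ω = S (J - g' + 1) ω - (if J - g' = 0 then 0 else S (J - g') ω) := by
      apply ae_finset_all
      intro g' hg'
      exact hindG_eq g' (hsub g' hg')
    filter_upwards [hall] with ω hω
    rw [Finset.sum_congr rfl hω]
    have hre : ∀ g' ∈ Finset.Icc (J - z + 1) J,
        S (J - g' + 1) ω - (if J - g' = 0 then 0 else S (J - g') ω)
          = (fun i => (fun k => if k = 0 then 0 else S k ω) (i + 1)
              - (fun k => if k = 0 then 0 else S k ω) i) (J - g') := by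
      intro g' hg'
      have h1 : ¬ (J - g' + 1 = 0) := by omega
      by_cases h0 : J - g' = 0 <;> simp [h0, h1]
    rw [Finset.sum_congr rfl hre]
    have htel : ∑ g' ∈ Finset.Icc (J - z + 1) J,
        (fun i => (fun k => if k = 0 then 0 else S k ω) (i + 1)
            - (fun k => if k = 0 then 0 else S k ω) i) (J - g')
        = ∑ i ∈ Finset.range z,
          ((fun k => if k = 0 then 0 else S k ω) (i + 1)
            - (fun k => if k = 0 then 0 else S k ω) i) := by
      apply Finset.sum_nbij' (i := fun g' => J - g') (j := fun k => J - k)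
      · intro a ha
        simp only [Finset.mem_Icc] at ha
        simp only [Finset.mem_range]
        omega
      · intro b hb
        simp only [Finset.mem_range] at hb
        simp only [Finset.mem_Icc]
        omega
      · intro a ha
        simp only [Finset.mem_Icc] at ha
        omega
      · intro b hb
        simp only [Finset.mem_range] at hb
        omega
      · intro a _
        rfl
    rw [htel, Finset.sum_range_sub (fun k => if k = 0 then 0 else S k ω) z]
    have hz0 : ¬ (z = 0) := by omega
    simp [hz0]
  -- e_{g'} = q_{g'} a.e.
  have heg_eq : ∀ g' ∈ Finset.Icc (J - z + 1) J, eg P X J S g' =ᵐ[P] q g' := by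
    intro g' hg'
    have hg'1 : 1 ≤ g' := (Finset.mem_Icc.mp (hsub g' hg')).1
    have hg'J : g' ≤ J := (Finset.mem_Icc.mp hg').2
    have h1 : eg P X J S g'
        =ᵐ[P] P[(fun ω => S (J - g' + 1) ω - (if J - g' = 0 then 0 else S (J - g') ω)) | mX X] :=
      condExp_congr_ae (hindG_eq g' (hsub g' hg'))
    by_cases h0 : J - g' = 0
    · have hfun : (fun ω => S (J - g' + 1) ω - (if J - g' = 0 then 0 else S (J - g') ω))
          = fun ω => S (J - g' + 1) ω := by
        funext ω; rw [if_pos h0]; ring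
      rw [hfun] at h1
      refine h1.trans ?_
      have hq' : q g' = fun ω => (P[S (J - g' + 1) | mX X]) ω - 0 := by
        funext ω
        have e1 : p (J - g' + 1) = P[S (J - g' + 1) | mX X] := hpk _ (by omega) (by omega)
        have e2 : p (J - g') ω = 0 := by rw [h0, hp0]
        show p (J - g' + 1) ω - p (J - g') ω = _
        rw [e1, e2]
      rw [hq']
      exact Filter.Eventually.of_forall fun ω => (sub_zero _).symm
    · have hfun : (fun ω => S (J - g' + 1) ω - (if J - g' = 0 then 0 else S (J - g') ω))
          = fun ω => S (J - g' + 1) ω - S (J - g') ω := by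
        funext ω; rw [if_neg h0]
      rw [hfun] at h1
      refine h1.trans ?_
      have h2 : P[(fun ω => S (J - g' + 1) ω - S (J - g') ω) | mX X]
          =ᵐ[P] P[S (J - g' + 1) | mX X] - P[S (J - g') | mX X] :=
        condExp_sub (hSint _) (hSint _) (mX X)
      refine h2.trans ?_
      have hq' : q g' = fun ω => (P[S (J - g' + 1) | mX X]) ω - (P[S (J - g') | mX X]) ω := by
        funext ω
        show p (J - g' + 1) ω - p (J - g') ω = _
        rw [hpk _ (by omega) (by omega), hpk _ (by omega) (by omega)]
      rw [hq']
      exact Filter.Eventually.of_forall fun ω => rfl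
  -- gather the a.e. facts
  have hdel_all : ∀ᵐ ω ∂P, ∀ g' ∈ Finset.Icc (J - z + 1) J,
      cm g' ω * eg P X J S J ω = δ g' (X ω) * cm J ω * eg P X J S g' ω := by
    apply ae_finset_all
    intro g' hg'
    filter_upwards [hδdef g' hg'] with ω hω
    exact hω
  have heq_all : ∀ᵐ ω ∂P, ∀ g' ∈ Finset.Icc (J - z + 1) J, eg P X J S g' ω = q g' ω := by
    apply ae_finset_all
    intro g' hg'
    exact heg_eq g' hg'
  have heJ_pos : ∀ᵐ ω ∂P, 0 < eg P X J S J ω := hepos J hJmem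
  -- the key pointwise algebra
  have hfinal : (fun ω => ∑ g' ∈ Finset.Icc (J - z + 1) J, w ω * cm g' ω) =ᵐ[P] cm g := by
    filter_upwards [hD_ae, hpz_ae, heJ_pos, hdel_all, heq_all] with ω h1 h2 h3 h4 h5
    have hD0 : D ω ≠ 0 := ne_of_gt (lt_of_lt_of_le hc' h1)
    have hpz0 : p z ω ≠ 0 := ne_of_gt (lt_of_lt_of_le hc h2)
    have heJ0 : eg P X J S J ω ≠ 0 := ne_of_gt h3
    have hDval : D ω = ∑ g' ∈ Finset.Icc (J - z + 1) J, δ g' (X ω) * q g' ω := rfl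
    have hsum : (∑ g' ∈ Finset.Icc (J - z + 1) J, cm g' ω) * eg P X J S J ω
        = cm J ω * D ω := by
      rw [Finset.sum_mul, hDval, Finset.mul_sum]
      refine Finset.sum_congr rfl fun g' hg' => ?_
      rw [h4 g' hg', h5 g' hg']
      ring
    have hgval : cm g ω * eg P X J S J ω = δ g (X ω) * cm J ω * q g ω := by
      rw [h4 g hg, h5 g hg]
    have hwval : w ω = δ g (X ω) * p z ω / D ω * (q g ω / p z ω) := rfl
    show ∑ g' ∈ Finset.Icc (J - z + 1) J, w ω * cm g' ω = cm g ω
    rw [← Finset.mul_sum, hwval]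
    have hsum' : ∑ g' ∈ Finset.Icc (J - z + 1) J, cm g' ω
        = cm J ω * D ω / eg P X J S J ω := by
      rw [eq_div_iff heJ0]; exact hsum
    rw [hsum']
    rw [← mul_div_cancel_right₀ (cm g ω) heJ0, hgval]
    rw [div_mul_div_comm, div_mul_div_comm, div_eq_div_iff (by simp [hD0, hpz0, heJ0]) heJ0]
    ring
  -- observed quantities on {Z = z}
  have hobs : ∀ ω, Yobs J Z Y ω * Sobs J Z S ω * indic Z z ω
      = Y z ω * S z ω * indic Z z ω := by
    intro ω
    by_cases hωz : Z ω = z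
    · have hY : Yobs J Z Y ω = Y z ω := by
        unfold Yobs
        rw [Finset.sum_eq_single z]
        · unfold indic; rw [if_pos hωz, one_mul]
        · intro b _ hbz
          unfold indic
          rw [if_neg (fun h => hbz (hωz ▸ h).symm ), zero_mul]
        · intro hzs; exact absurd hz hzs
      have hS : Sobs J Z S ω = S z ω := by
        unfold Sobs
        rw [Finset.sum_eq_single z]
        · unfold indic; rw [if_pos hωz, one_mul]
        · intro b _ hbz
          unfold indic
          rw [if_neg (fun h => hbz (hωz ▸ h).symm ), zero_mul]
        · intro hzs; exact absurd hz hzs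
      rw [hY, hS]
    · have hi : indic Z z ω = 0 := by unfold indic; rw [if_neg hωz]
      rw [hi, mul_zero, mul_zero]
  -- independence step
  set T : Ω → 𝒳 × (ℕ → ℝ) × (ℕ → ℝ) := fun ω => (X ω, fun k => S k ω, fun k => Y k ω)
    with hTdef
  set W : Ω → ℝ := fun ω => w ω * (Y z ω * S z ω) with hWdef
  have hTm : Measurable[MeasurableSpace.comap T inferInstance] T :=
    measurable_iff_comap_le.mpr le_rfl
  have hmle : mX X ≤ MeasurableSpace.comap T inferInstance := by
    have h1 : mX X = MeasurableSpace.comap T (MeasurableSpace.comap Prod.fst inferInstance) := by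
      rw [MeasurableSpace.comap_comp]
      rfl
    rw [h1]
    exact MeasurableSpace.comap_mono (measurable_iff_comap_le.mp measurable_fst)
  have hWmT : Measurable[MeasurableSpace.comap T inferInstance] W := by
    have hYT : Measurable[MeasurableSpace.comap T inferInstance] fun ω => Y z ω :=
      (measurable_pi_apply z).comp (measurable_snd.comp (measurable_snd.comp hTm))
    have hST : Measurable[MeasurableSpace.comap T inferInstance] fun ω => S z ω :=
      (measurable_pi_apply z).comp (measurable_fst.comp (measurable_snd.comp hTm))
    exact (hwm.mono hmle le_rfl).mul (hYT.mul hST)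
  have hiZ : Measurable[MeasurableSpace.comap Z inferInstance] (indic Z z) := by
    have hZ' : Measurable[MeasurableSpace.comap Z inferInstance] Z :=
      measurable_iff_comap_le.mpr le_rfl
    have houter : Measurable fun n : ℕ => if n = z then (1:ℝ) else 0 :=
      Measurable.ite (measurableSet_eq) measurable_const measurable_const
    exact houter.comp hZ'
  have hIF : IndepFun (indic Z z) W P :=
    indep_of_indep_of_le_left
      (indep_of_indep_of_le_right hindep (measurable_iff_comap_le.mp hWmT))
      (measurable_iff_comap_le.mp hiZ)
  have hiZint : Integrable (indic Z z) P := by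
    refine (integrable_const (1:ℝ)).mono'
      ((hiZ.mono (measurable_iff_comap_le.mp hset.hZ) le_rfl).aestronglyMeasurable) ?_
    exact Filter.Eventually.of_forall fun ω => by unfold indic; split_ifs <;> simp
  have hYSint : Integrable (fun ω => Y z ω * S z ω) P := by
    have h := (hset.hYint z).bdd_mul (hset.hSm z).aestronglyMeasurable
      (c := 1) (Filter.Eventually.of_forall fun ω => by rcases hset.hS01 z ω with h | h <;> simp [h])
    exact h.congr (Filter.Eventually.of_forall fun ω => mul_comm _ _)
  have hWint : Integrable W P := hwint_mul _ hYSint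
  have hintW : ∫ ω, W ω * indic Z z ω ∂P = piZ P Z z * ∫ ω, W ω ∂P := by
    have h := hIF.integral_mul_eq_mul_integral hiZint.aestronglyMeasurable hWint.aestronglyMeasurable
    have hI : ∫ ω, indic Z z ω ∂P = piZ P Z z := by
      have hind : indic Z z = Set.indicator {ω | Z ω = z} fun _ => (1:ℝ) := by
        funext ω
        simp only [indic, Set.indicator_apply, Set.mem_setOf_eq]
      rw [hind, integral_indicator_const (1:ℝ) (show MeasurableSet {ω | Z ω = z} from hset.hZ (measurableSet_singleton z))]
      simp [piZ, Measure.real]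
    calc ∫ ω, W ω * indic Z z ω ∂P = ∫ ω, (indic Z z * W) ω ∂P := by
          congr 1
          funext ω
          exact mul_comm _ _
      _ = (∫ ω, indic Z z ω ∂P) * ∫ ω, W ω ∂P := h
      _ = piZ P Z z * ∫ ω, W ω ∂P := by rw [hI]
  -- conditional expectation step, for each stratum
  have hstep : ∀ g' ∈ Finset.Icc (J - z + 1) J,
      ∫ ω, w ω * (Y z ω * indG J S g' ω) ∂P = ∫ ω, w ω * cm g' ω ∂P := by
    intro g' hg'
    have hint := hindGint g'
    have hmul : P[(fun ω => w ω * (Y z ω * indG J S g' ω)) | mX X]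
        =ᵐ[P] fun ω => w ω * cm g' ω :=
      condExp_mul_of_stronglyMeasurable_left hwsm (hwint_mul _ hint) hint
    calc ∫ ω, w ω * (Y z ω * indG J S g' ω) ∂P
        = ∫ ω, (P[(fun ω => w ω * (Y z ω * indG J S g' ω)) | mX X]) ω ∂P :=
          (integral_condExp hm).symm
      _ = ∫ ω, w ω * cm g' ω ∂P := integral_congr_ae hmul
  have hWeq : ∫ ω, W ω ∂P = ∫ ω, Y z ω * indG J S g ω ∂P := by
    calc ∫ ω, W ω ∂P
        = ∫ ω, ∑ g' ∈ Finset.Icc (J - z + 1) J, w ω * (Y z ω * indG J S g' ω) ∂P := by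
          apply integral_congr_ae
          filter_upwards [hSz_eq] with ω hω
          calc W ω = w ω * (Y z ω * S z ω) := rfl
            _ = w ω * (Y z ω * ∑ g' ∈ Finset.Icc (J - z + 1) J, indG J S g' ω) := by rw [hω]
            _ = ∑ g' ∈ Finset.Icc (J - z + 1) J, w ω * (Y z ω * indG J S g' ω) := by
                rw [Finset.mul_sum, Finset.mul_sum]
      _ = ∑ g' ∈ Finset.Icc (J - z + 1) J, ∫ ω, w ω * (Y z ω * indG J S g' ω) ∂P :=
          integral_finset_sum _ fun g' _ => hwint_mul _ (hindGint g')
      _ = ∑ g' ∈ Finset.Icc (J - z + 1) J, ∫ ω, w ω * cm g' ω ∂P :=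
          Finset.sum_congr rfl hstep
      _ = ∫ ω, ∑ g' ∈ Finset.Icc (J - z + 1) J, w ω * cm g' ω ∂P :=
          (integral_finset_sum _ fun g' _ => hwint_mul _ integrable_condExp).symm
      _ = ∫ ω, cm g ω ∂P := integral_congr_ae hfinal
      _ = ∫ ω, Y z ω * indG J S g ω ∂P := integral_condExp hm
  calc piZ P Z z * ∫ ω, Y z ω * indG J S g ω ∂P
      = piZ P Z z * ∫ ω, W ω ∂P := by rw [hWeq]
    _ = ∫ ω, W ω * indic Z z ω ∂P := hintW.symm
    _ = ∫ ω, w ω * (Yobs J Z Y ω * Sobs J Z S ω * indic Z z ω) ∂P := by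
        apply integral_congr_ae
        apply Filter.Eventually.of_forall
        intro ω
        show W ω * indic Z z ω = w ω * (Yobs J Z Y ω * Sobs J Z S ω * indic Z z ω)
        rw [hobs ω]
        exact mul_assoc _ _ _


end TruncationByDeath
end
end
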